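/- arXiv:0910.2289 — 7 statements merged into one kernel-verified Lean document; each statement's English description precedes it below -/
import Mathlib

section
/- Let r ≥ 0 be an integer and m > -1/2 a real number. Let h : (0,∞) → ℂ be (r+1)-times continuously differentiable on (0,∞), and suppose there is ρ > 0 with h(x) = 0 for all x ≥ ρ. Then ∫₀^∞ x^{2m} |h^{(r)}(x)|² dx ≤ (m + 1/2)^{-2} ∫₀^∞ x^{2m+2} |h^{(r+1)}(x)|² dx, as an inequality of (possibly infinite) Lebesgue integrals of nonnegative functions. -/
open MeasureTheory Set
open scoped ENNReal

lemma aux_vanish (r : ℕ) (h : ℝ → ℂ) (ρ : ℝ) (hvanish : ∀ x, ρ ≤ x → h x = 0)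
    {x : ℝ} (hρx : ρ < x) (hx0 : 0 < x) : iteratedDerivWithin r h (Set.Ioi 0) x = 0 := by
  have h1 : iteratedDerivWithin r h (Set.Ioi 0) x = iteratedDeriv r h x := by
    rw [iteratedDerivWithin_eq_iteratedFDerivWithin, iteratedDeriv_eq_iteratedFDeriv,
      iteratedFDerivWithin_of_isOpen r isOpen_Ioi hx0]
  have h2 : iteratedDeriv r h x = iteratedDeriv r (fun _ => (0:ℂ)) x := by
    apply Filter.EventuallyEq.iteratedDeriv_eq
    filter_upwards [Ioi_mem_nhds hρx] with y hy
    exact hvanish y (le_of_lt hy)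
  have h3 : iteratedDeriv r (fun _ : ℝ => (0:ℂ)) x = 0 := by
    rw [iteratedDeriv_eq_iteratedFDeriv, iteratedFDeriv_zero_fun]; simp
  rw [h1, h2, h3]

/-- Lemma 2.4(a): weighted Hardy inequality on the half line. -/
theorem weighted_hardy_inequality
    (r : ℕ) (m : ℝ) (hm : -1/2 < m) (h : ℝ → ℂ)
    (hsmooth : ContDiffOn ℝ (r + 1 : ℕ∞) h (Set.Ioi 0))
    (ρ : ℝ) (hρ : 0 < ρ) (hvanish : ∀ x, ρ ≤ x → h x = 0) :
    ∫⁻ x in Set.Ioi (0:ℝ),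
        ENNReal.ofReal (x ^ (2*m) * ‖iteratedDerivWithin r h (Set.Ioi 0) x‖^2)
      ≤ ENNReal.ofReal (((m + 1/2)^2)⁻¹) *
        ∫⁻ x in Set.Ioi (0:ℝ),
          ENNReal.ofReal (x ^ (2*m + 2) * ‖iteratedDerivWithin (r+1) h (Set.Ioi 0) x‖^2) := by
  have hs_ud : UniqueDiffOn ℝ (Set.Ioi (0:ℝ)) := uniqueDiffOn_Ioi 0
  set g : ℝ → ℂ := iteratedDerivWithin r h (Set.Ioi 0) with hg_def
  set g' : ℝ → ℂ := iteratedDerivWithin (r+1) h (Set.Ioi 0) with hg'_def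
  have hg_cont : ContinuousOn g (Set.Ioi 0) :=
    hsmooth.continuousOn_iteratedDerivWithin (by exact_mod_cast Nat.le_succ r) hs_ud
  have hg'_cont : ContinuousOn g' (Set.Ioi 0) :=
    hsmooth.continuousOn_iteratedDerivWithin (by exact_mod_cast le_rfl) hs_ud
  have hg_diff : DifferentiableOn ℝ g (Set.Ioi 0) :=
    hsmooth.differentiableOn_iteratedDerivWithin (by exact_mod_cast Nat.lt_succ_self r) hs_ud
  have hg_deriv : ∀ x ∈ Set.Ioi (0:ℝ), HasDerivAt g (g' x) x := by
    intro x hx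
    have hd : DifferentiableAt ℝ g x := (hg_diff x hx).differentiableAt (isOpen_Ioi.mem_nhds hx)
    have he : g' x = deriv g x := by
      rw [hg'_def, iteratedDerivWithin_succ, ← hg_def,
        derivWithin_of_isOpen isOpen_Ioi hx]
    rw [he]; exact hd.hasDerivAt
  have hgvan : ∀ x, ρ < x → g x = 0 := fun x hx =>
    aux_vanish r h ρ hvanish hx (lt_trans hρ hx)
  set R := ρ + 1 with hR_def
  have hR : 0 < R := by rw [hR_def]; linarith
  have hgR : g R = 0 := hgvan R (by rw [hR_def]; linarith)
  have key : ∀ ε : ℝ, 0 < ε → ε < R →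
      ∫⁻ x in Ioc ε R, ENNReal.ofReal (x ^ (2*m) * ‖g x‖^2)
        ≤ ENNReal.ofReal (((m + 1/2)^2)⁻¹) *
          ∫⁻ x in Set.Ioi (0:ℝ), ENNReal.ofReal (x ^ (2*m + 2) * ‖g' x‖^2) := by
    intro ε hε hεR
    have hreal : ∫ x in Ioc ε R, x ^ (2*m) * ‖g x‖^2
        ≤ (2/(2*m+1)) * ∫ x in Ioc ε R, x ^ (2*m+1) * (‖g x‖ * ‖g' x‖) := by
      have hc : (0:ℝ) < 2*m+1 := by linarith
      have hsub : Set.Icc ε R ⊆ Set.Ioi (0:ℝ) := fun x hx => lt_of_lt_of_le hε hx.1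
      -- continuity facts on Icc ε R
      have hrw : ∀ c : ℝ, ContinuousOn (fun x : ℝ => x ^ c) (Set.Icc ε R) := by
        intro c
        apply ContinuousOn.rpow_const continuousOn_id
        intro x hx; exact Or.inl (ne_of_gt (hsub hx))
      have hgc := hg_cont.mono hsub
      have hg'c := hg'_cont.mono hsub
      have hPc : ContinuousOn (fun x => x ^ (2*m) * ‖g x‖^2) (Set.Icc ε R) :=
        (hrw (2*m)).mul (hgc.norm.pow 2)
      have hQc : ContinuousOn (fun x => x ^ (2*m+1) * (inner ℝ (g x) (g' x) : ℝ)) (Set.Icc ε R) :=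
        (hrw (2*m+1)).mul (hgc.inner hg'c)
      have hNc : ContinuousOn (fun x => x ^ (2*m+1) * (‖g x‖ * ‖g' x‖)) (Set.Icc ε R) :=
        (hrw (2*m+1)).mul (hgc.norm.mul hg'c.norm)
      have hεR' : ε ≤ R := le_of_lt hεR
      -- FTC
      have hFTC : ∫ x in ε..R, ((2*m+1) * (x^(2*m) * ‖g x‖^2)
            + 2 * (x^(2*m+1) * (inner ℝ (g x) (g' x) : ℝ)))
          = R ^ (2*m+1) * ‖g R‖^2 - ε ^ (2*m+1) * ‖g ε‖^2 := by
        apply intervalIntegral.integral_eq_sub_of_hasDerivAt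
          (f := fun x => x ^ (2*m+1) * ‖g x‖^2)
        · intro x hx
          rw [Set.uIcc_of_le hεR'] at hx
          have hx0 : 0 < x := hsub hx
          have hgd := hg_deriv x hx0
          have hu : HasDerivAt (fun y => ‖g y‖^2) (2 * (inner ℝ (g x) (g' x) : ℝ)) x := by
            have h1 := HasDerivAt.inner (𝕜 := ℝ) hgd hgd
            have h2 : (fun t => (inner ℝ (g t) (g t) : ℝ)) = fun t => ‖g t‖^2 := by
              funext t; exact real_inner_self_eq_norm_sq (g t)
            rw [h2] at h1
            exact h1.congr_deriv (by rw [real_inner_comm (g' x) (g x)]; ring)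
          have hp : HasDerivAt (fun y : ℝ => y ^ (2*m+1)) ((2*m+1) * x^(2*m)) x := by
            have := Real.hasDerivAt_rpow_const (x := x) (p := 2*m+1) (Or.inl (ne_of_gt hx0))
            convert this using 2; ring_nf
          exact (hp.mul hu).congr_deriv (by ring)
        · apply ContinuousOn.intervalIntegrable
          rw [Set.uIcc_of_le hεR']
          exact ((continuousOn_const.mul hPc).add (continuousOn_const.mul hQc))
      have hint_P : IntervalIntegrable (fun x => x ^ (2*m) * ‖g x‖^2) volume ε R := by
        apply ContinuousOn.intervalIntegrable; rwa [Set.uIcc_of_le hεR']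
      have hint_Q : IntervalIntegrable (fun x => x ^ (2*m+1) * (inner ℝ (g x) (g' x) : ℝ)) volume ε R := by
        apply ContinuousOn.intervalIntegrable; rwa [Set.uIcc_of_le hεR']
      have hint_N : IntervalIntegrable (fun x => x ^ (2*m+1) * (‖g x‖ * ‖g' x‖)) volume ε R := by
        apply ContinuousOn.intervalIntegrable; rwa [Set.uIcc_of_le hεR']
      -- split the integral
      have hsplit : ∫ x in ε..R, ((2*m+1) * (x^(2*m) * ‖g x‖^2)
            + 2 * (x^(2*m+1) * (inner ℝ (g x) (g' x) : ℝ)))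
          = (2*m+1) * (∫ x in ε..R, x^(2*m) * ‖g x‖^2)
            + 2 * ∫ x in ε..R, x^(2*m+1) * (inner ℝ (g x) (g' x) : ℝ) := by
        rw [intervalIntegral.integral_add (hint_P.const_mul _) (hint_Q.const_mul _),
          intervalIntegral.integral_const_mul, intervalIntegral.integral_const_mul]
      have hFε : (0:ℝ) ≤ ε ^ (2*m+1) * ‖g ε‖^2 :=
        mul_nonneg (Real.rpow_nonneg (le_of_lt hε) _) (sq_nonneg _)
      have hQbound : |∫ x in ε..R, x^(2*m+1) * (inner ℝ (g x) (g' x) : ℝ)|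
          ≤ ∫ x in ε..R, x^(2*m+1) * (‖g x‖ * ‖g' x‖) := by
        calc |∫ x in ε..R, x^(2*m+1) * (inner ℝ (g x) (g' x) : ℝ)|
            ≤ ∫ x in ε..R, |x^(2*m+1) * (inner ℝ (g x) (g' x) : ℝ)| :=
              intervalIntegral.abs_integral_le_integral_abs hεR'
          _ ≤ ∫ x in ε..R, x^(2*m+1) * (‖g x‖ * ‖g' x‖) := by
              apply intervalIntegral.integral_mono_on hεR' hint_Q.abs hint_N
              intro x hx
              have hx0 : 0 < x := hsub hx
              rw [abs_mul, abs_of_nonneg (Real.rpow_nonneg (le_of_lt hx0) _)]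
              exact mul_le_mul_of_nonneg_left (abs_real_inner_le_norm _ _)
                (Real.rpow_nonneg (le_of_lt hx0) _)
      have key : (2*m+1) * (∫ x in ε..R, x^(2*m) * ‖g x‖^2)
          ≤ 2 * ∫ x in ε..R, x^(2*m+1) * (‖g x‖ * ‖g' x‖) := by
        have h0 : (2*m+1) * (∫ x in ε..R, x^(2*m) * ‖g x‖^2)
            + 2 * ∫ x in ε..R, x^(2*m+1) * (inner ℝ (g x) (g' x) : ℝ) ≤ 0 := by
          rw [← hsplit, hFTC, hgR]; simp; positivity
        nlinarith [abs_le.mp hQbound]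
      simp only [intervalIntegral.integral_of_le hεR'] at key
      rw [div_mul_eq_mul_div, le_div_iff₀ hc]
      linarith [key]
    have hc : (0:ℝ) < 2*m+1 := by linarith
    have hεR' : ε ≤ R := le_of_lt hεR
    have hsub : Set.Icc ε R ⊆ Set.Ioi (0:ℝ) := fun x hx => lt_of_lt_of_le hε hx.1
    have hsub' : Set.Ioc ε R ⊆ Set.Ioi (0:ℝ) := fun x hx => lt_trans hε hx.1
    have hrw : ∀ c : ℝ, ContinuousOn (fun x : ℝ => x ^ c) (Set.Icc ε R) := by
      intro c
      apply ContinuousOn.rpow_const continuousOn_id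
      intro x hx; exact Or.inl (ne_of_gt (hsub hx))
    have hgc := hg_cont.mono hsub
    have hg'c := hg'_cont.mono hsub
    have hint_P : IntegrableOn (fun x => x ^ (2*m) * ‖g x‖^2) (Ioc ε R) volume := by
      rw [← intervalIntegrable_iff_integrableOn_Ioc_of_le hεR']
      apply ContinuousOn.intervalIntegrable
      rw [Set.uIcc_of_le hεR']
      exact (hrw (2*m)).mul (hgc.norm.pow 2)
    have hint_N : IntegrableOn (fun x => x ^ (2*m+1) * (‖g x‖ * ‖g' x‖)) (Ioc ε R) volume := by
      rw [← intervalIntegrable_iff_integrableOn_Ioc_of_le hεR']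
      apply ContinuousOn.intervalIntegrable
      rw [Set.uIcc_of_le hεR']
      exact (hrw (2*m+1)).mul (hgc.norm.mul hg'c.norm)
    have hnnP : 0 ≤ᵐ[volume.restrict (Ioc ε R)] fun x => x ^ (2*m) * ‖g x‖^2 := by
      filter_upwards [ae_restrict_mem measurableSet_Ioc] with x hx
      exact mul_nonneg (Real.rpow_nonneg (le_of_lt (hsub' hx)) _) (sq_nonneg _)
    have hnnN : 0 ≤ᵐ[volume.restrict (Ioc ε R)] fun x => x ^ (2*m+1) * (‖g x‖ * ‖g' x‖) := by
      filter_upwards [ae_restrict_mem measurableSet_Ioc] with x hx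
      exact mul_nonneg (Real.rpow_nonneg (le_of_lt (hsub' hx)) _)
        (mul_nonneg (norm_nonneg _) (norm_nonneg _))
    set A : ℝ≥0∞ := ∫⁻ x in Ioc ε R, ENNReal.ofReal (x ^ (2*m) * ‖g x‖^2) with hA_def
    set Bε : ℝ≥0∞ := ∫⁻ x in Ioc ε R, ENNReal.ofReal (x ^ (2*m+2) * ‖g' x‖^2) with hB_def
    have hA_eq : A = ENNReal.ofReal (∫ x in Ioc ε R, x ^ (2*m) * ‖g x‖^2) :=
      (ofReal_integral_eq_lintegral_ofReal hint_P hnnP).symm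
    have hI_eq : ENNReal.ofReal (∫ x in Ioc ε R, x ^ (2*m+1) * (‖g x‖ * ‖g' x‖))
        = ∫⁻ x in Ioc ε R, ENNReal.ofReal (x ^ (2*m+1) * (‖g x‖ * ‖g' x‖)) :=
      ofReal_integral_eq_lintegral_ofReal hint_N hnnN
    -- step 1 : A ≤ C * ∫⁻ N
    set C : ℝ≥0∞ := ENNReal.ofReal (2/(2*m+1)) with hC_def
    have step1 : A ≤ C * ∫⁻ x in Ioc ε R, ENNReal.ofReal (x ^ (2*m+1) * (‖g x‖ * ‖g' x‖)) := by
      rw [hA_eq, ← hI_eq, ← ENNReal.ofReal_mul (by positivity)]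
      exact ENNReal.ofReal_le_ofReal hreal
    -- Hölder
    set p : ℝ → ℝ≥0∞ := fun x => ENNReal.ofReal (x ^ m * ‖g x‖) with hp_def
    set q : ℝ → ℝ≥0∞ := fun x => ENNReal.ofReal (x ^ (m+1) * ‖g' x‖) with hq_def
    have hpm : AEMeasurable p (volume.restrict (Ioc ε R)) := by
      apply ContinuousOn.aemeasurable _ measurableSet_Ioc
      apply Continuous.comp_continuousOn ENNReal.continuous_ofReal
      exact ((hrw m).mul hgc.norm).mono Ioc_subset_Icc_self
    have hqm : AEMeasurable q (volume.restrict (Ioc ε R)) := by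
      apply ContinuousOn.aemeasurable _ measurableSet_Ioc
      apply Continuous.comp_continuousOn ENNReal.continuous_ofReal
      exact ((hrw (m+1)).mul hg'c.norm).mono Ioc_subset_Icc_self
    have hNpq : ∫⁻ x in Ioc ε R, ENNReal.ofReal (x ^ (2*m+1) * (‖g x‖ * ‖g' x‖))
        = ∫⁻ x in Ioc ε R, p x * q x := by
      apply setLIntegral_congr_fun measurableSet_Ioc
      intro x hx
      have hx0 : 0 < x := lt_trans hε hx.1
      rw [hp_def, hq_def]; beta_reduce; rw [← ENNReal.ofReal_mul (by positivity)]
      congr 1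
      rw [show (2*m+1) = m + (m+1) by ring, Real.rpow_add hx0]
      ring
    have hp2 : ∫⁻ x in Ioc ε R, p x ^ (2:ℝ) = A := by
      rw [hA_def]
      apply setLIntegral_congr_fun measurableSet_Ioc
      intro x hx
      have hx0 : 0 < x := lt_trans hε hx.1
      show ENNReal.ofReal (x ^ m * ‖g x‖) ^ (2:ℝ) = _
      rw [ENNReal.ofReal_rpow_of_nonneg (by positivity) (by norm_num)]
      congr 1
      rw [Real.mul_rpow (by positivity) (norm_nonneg _), ← Real.rpow_mul hx0.le,
        show ‖g x‖ ^ (2:ℝ) = ‖g x‖^2 by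
          rw [show (2:ℝ) = ((2:ℕ):ℝ) by norm_num, Real.rpow_natCast],
        mul_comm m 2]
    have hq2 : ∫⁻ x in Ioc ε R, q x ^ (2:ℝ) = Bε := by
      rw [hB_def]
      apply setLIntegral_congr_fun measurableSet_Ioc
      intro x hx
      have hx0 : 0 < x := lt_trans hε hx.1
      show ENNReal.ofReal (x ^ (m+1) * ‖g' x‖) ^ (2:ℝ) = _
      rw [ENNReal.ofReal_rpow_of_nonneg (by positivity) (by norm_num)]
      congr 1
      rw [Real.mul_rpow (by positivity) (norm_nonneg _), ← Real.rpow_mul hx0.le,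
        show ‖g' x‖ ^ (2:ℝ) = ‖g' x‖^2 by
          rw [show (2:ℝ) = ((2:ℕ):ℝ) by norm_num, Real.rpow_natCast],
        show (m+1)*2 = 2*m+2 by ring]
    have hpq2 : Real.HolderConjugate 2 2 := Real.HolderConjugate.two_two
    have holder : ∫⁻ x in Ioc ε R, p x * q x ≤ A ^ (1/2:ℝ) * Bε ^ (1/2:ℝ) := by
      have H := ENNReal.lintegral_mul_le_Lp_mul_Lq (volume.restrict (Ioc ε R)) hpq2 hpm hqm
      simpa only [Pi.mul_apply, hp2, hq2] using H
    -- combine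
    have step2 : A ≤ C * (A ^ (1/2:ℝ) * Bε ^ (1/2:ℝ)) :=
      step1.trans (by rw [hNpq]; exact mul_le_mul_right holder C)
    have hBεB : Bε ≤ ∫⁻ x in Set.Ioi (0:ℝ), ENNReal.ofReal (x ^ (2*m + 2) * ‖g' x‖^2) := by
      rw [hB_def]
      exact lintegral_mono' (Measure.restrict_mono hsub' le_rfl) le_rfl
    have hAne : A ≠ ⊤ := by rw [hA_eq]; exact ENNReal.ofReal_ne_top
    have hCsq : C * C = ENNReal.ofReal (((m + 1/2)^2)⁻¹) := by
      rw [hC_def, ← ENNReal.ofReal_mul (by positivity)]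
      congr 1
      rw [div_mul_div_comm, inv_eq_one_div,
        div_eq_div_iff (mul_pos hc hc).ne' (pow_pos (by linarith : (0:ℝ) < m + 1/2) 2).ne']
      ring
    -- cancel
    have hfinal : A ≤ ENNReal.ofReal (((m + 1/2)^2)⁻¹) * Bε := by
      rcases eq_or_ne A 0 with h0 | h0
      · rw [h0]; exact zero_le
      have hroot_ne0 : A ^ (1/2:ℝ) ≠ 0 := by
        simp [ENNReal.rpow_eq_zero_iff, h0, hAne]
      have hroot_netop : A ^ (1/2:ℝ) ≠ ⊤ := by
        simp [ENNReal.rpow_eq_top_iff, h0, hAne]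
      have hAsplit : A = A ^ (1/2:ℝ) * A ^ (1/2:ℝ) := by
        rw [← ENNReal.rpow_add_of_nonneg (1/2:ℝ) (1/2:ℝ) (by norm_num) (by norm_num)]
        norm_num
      have hstep : A ^ (1/2:ℝ) * A ^ (1/2:ℝ) ≤ (C * Bε ^ (1/2:ℝ)) * A ^ (1/2:ℝ) := by
        rw [← hAsplit]
        calc A ≤ C * (A ^ (1/2:ℝ) * Bε ^ (1/2:ℝ)) := step2
          _ = (C * Bε ^ (1/2:ℝ)) * A ^ (1/2:ℝ) := by ring
      have hcancel : A ^ (1/2:ℝ) ≤ C * Bε ^ (1/2:ℝ) :=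
        (ENNReal.mul_le_mul_iff_left hroot_ne0 hroot_netop).mp hstep
      calc A = A ^ (1/2:ℝ) * A ^ (1/2:ℝ) := hAsplit
        _ ≤ (C * Bε ^ (1/2:ℝ)) * (C * Bε ^ (1/2:ℝ)) := mul_le_mul' hcancel hcancel
        _ = (C * C) * (Bε ^ (1/2:ℝ) * Bε ^ (1/2:ℝ)) := by ring
        _ = ENNReal.ofReal (((m + 1/2)^2)⁻¹) * Bε := by
            rw [hCsq, ← ENNReal.rpow_add_of_nonneg (1/2:ℝ) (1/2:ℝ) (by norm_num) (by norm_num)]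
            norm_num
    exact hfinal.trans (mul_le_mul_right hBεB _)
  set f : ℝ → ℝ≥0∞ := fun x => ENNReal.ofReal (x ^ (2*m) * ‖g x‖^2) with hf_def
  have hf_cont : ContinuousOn f (Set.Ioi 0) := by
    apply Continuous.comp_continuousOn ENNReal.continuous_ofReal
    apply ContinuousOn.mul _ (hg_cont.norm.pow 2)
    apply ContinuousOn.rpow_const continuousOn_id
    intro x hx; exact Or.inl (ne_of_gt hx)
  have hfm : AEMeasurable f (volume.restrict (Set.Ioi 0)) :=
    hf_cont.aemeasurable measurableSet_Ioi
  set seq : ℕ → ℝ := fun n => R / (n + 2) with hseq_def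
  have hε_pos : ∀ n, 0 < seq n := fun n => by rw [hseq_def]; positivity
  have hε_lt : ∀ n, seq n < R := fun n => by
    rw [hseq_def]; apply div_lt_self hR; push_cast; linarith
  have hε_anti : ∀ ⦃i j : ℕ⦄, i ≤ j → seq j ≤ seq i := by
    intro i j hij
    apply div_le_div_of_nonneg_left (le_of_lt hR) (by positivity)
    have : (i:ℝ) ≤ (j:ℝ) := Nat.cast_le.mpr hij
    linarith
  set F : ℕ → ℝ → ℝ≥0∞ := fun n => (Set.Ioi (seq n)).indicator f with hF_def
  have hFm : ∀ n, AEMeasurable (F n) (volume.restrict (Set.Ioi 0)) := fun n =>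
    hfm.indicator measurableSet_Ioi
  have hFmono : ∀ x, Monotone (fun n => F n x) := by
    intro x i j hij
    exact Set.indicator_le_indicator_of_subset (Set.Ioi_subset_Ioi (hε_anti hij))
      (fun _ => zero_le) x
  have hFsup : ∀ x ∈ Set.Ioi (0:ℝ), (⨆ n, F n x) = f x := by
    intro x hx
    apply le_antisymm
    · exact iSup_le fun n => Set.indicator_le_self _ _ x
    · obtain ⟨n, hn⟩ : ∃ n : ℕ, seq n < x := by
        obtain ⟨n, hn⟩ := exists_nat_gt (R / x)
        refine ⟨n, ?_⟩
        rw [hseq_def, div_lt_iff₀ (by positivity)]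
        rw [div_lt_iff₀ hx] at hn
        calc R < x * n := by linarith
          _ ≤ x * (n + 2) := by nlinarith [le_of_lt (Set.mem_Ioi.mp hx)]
      calc f x = F n x := by rw [hF_def]; simp [Set.indicator_of_mem (Set.mem_Ioi.mpr hn)]
        _ ≤ ⨆ k, F k x := le_iSup (fun k => F k x) n
  have hmc : ∫⁻ x in Set.Ioi (0:ℝ), f x = ⨆ n, ∫⁻ x in Set.Ioi (0:ℝ), F n x := by
    rw [← lintegral_iSup' hFm (ae_of_all _ hFmono)]
    apply lintegral_congr_ae
    filter_upwards [ae_restrict_mem measurableSet_Ioi] with x hx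
    exact (hFsup x hx).symm
  rw [hmc]
  apply iSup_le
  intro n
  have h1 : ∫⁻ x in Set.Ioi (0:ℝ), F n x = ∫⁻ x in Set.Ioi (seq n), f x := by
    rw [hF_def, lintegral_indicator measurableSet_Ioi,
      Measure.restrict_restrict measurableSet_Ioi]
    congr 1
    rw [Set.Ioi_inter_Ioi, max_eq_left (le_of_lt (hε_pos n))]
  rw [h1]
  have h2 : Set.Ioi (seq n) = Set.Ioc (seq n) R ∪ Set.Ioi R :=
    (Set.Ioc_union_Ioi_eq_Ioi (le_of_lt (hε_lt n))).symm
  rw [h2]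
  refine le_trans (lintegral_union_le _ _ _) ?_
  have h3 : ∫⁻ x in Set.Ioi R, f x = 0 := by
    rw [hf_def]
    have : ∀ x ∈ Set.Ioi R, ENNReal.ofReal (x ^ (2*m) * ‖g x‖^2) = 0 := by
      intro x hx
      rw [hgvan x (by simp at hx; linarith)]
      simp
    rw [setLIntegral_congr_fun measurableSet_Ioi this]
    simp
  rw [h3, add_zero]
  exact key (seq n) (hε_pos n) (hε_lt n)
end

section
/- Let r ≥ 0 be an integer and p ≥ 0, m > r − 1/2 real numbers. There exists a constant C ≥ 1, depending only on m, p and r, such that for every function h : (0,∞) → ℂ that is r-times continuously differentiable on (0,∞) and vanishes for all sufficiently large x, one has C^{-1} ‖x^m (x^p h)^{(r)}‖ ≤ ‖x^{m+p} h^{(r)}‖ ≤ C ‖x^m (x^p h)^{(r)}‖, where both inequalities are understood in [0,∞] (so in particular one side is finite if and only if the other is). -/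
open MeasureTheory Set
open scoped ENNReal NNReal

namespace WNE

lemma measurable_W (a : ℝ) : Measurable fun t : ℝ => ENNReal.ofReal t ^ a :=
  ENNReal.continuous_rpow_const.measurable.comp ENNReal.measurable_ofReal

open intervalIntegral in
lemma II_rpow {r : ℝ} (h : -1 < r) (a b : ℝ) :
    IntervalIntegrable (fun x : ℝ => x ^ r) volume a b :=
  intervalIntegrable_rpow' h

open intervalIntegral in
lemma lintegral_W_Ioo (a : ℝ) (ha : -1 < a) (t : ℝ) (ht : 0 < t) :
    ∫⁻ x in Ioo (0:ℝ) t, ENNReal.ofReal x ^ a = ENNReal.ofReal (t ^ (a+1) / (a+1)) := by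
  have h1 : ∫⁻ x in Ioo (0:ℝ) t, ENNReal.ofReal x ^ a
      = ∫⁻ x in Ioo (0:ℝ) t, ENNReal.ofReal (x ^ a) := by
    refine setLIntegral_congr_fun measurableSet_Ioo (fun x hx => ?_)
    rw [ENNReal.ofReal_rpow_of_pos hx.1]
  rw [h1, Measure.restrict_congr_set Ioo_ae_eq_Ioc]
  have hint : IntegrableOn (fun x : ℝ => x ^ a) (Ioc 0 t) volume := by
    rw [← intervalIntegrable_iff_integrableOn_Ioc_of_le ht.le]
    exact II_rpow ha _ _
  rw [← ofReal_integral_eq_lintegral_ofReal hint]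
  · have := integral_rpow (a := 0) (b := t) (Or.inl ha)
    rw [integral_of_le ht.le] at this
    rw [this, Real.zero_rpow (by linarith : a + 1 ≠ 0), sub_zero]
  · filter_upwards [self_mem_ae_restrict measurableSet_Ioc] with x hx
    exact Real.rpow_nonneg hx.1.le _

lemma lintegral_W_Ioi (a : ℝ) (ha : a < -1) (x : ℝ) (hx : 0 < x) :
    ∫⁻ t in Ioi x, ENNReal.ofReal t ^ a = ENNReal.ofReal (-x ^ (a+1) / (a+1)) := by
  have h1 : ∫⁻ t in Ioi x, ENNReal.ofReal t ^ a
      = ∫⁻ t in Ioi x, ENNReal.ofReal (t ^ a) := by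
    refine setLIntegral_congr_fun measurableSet_Ioi (fun t htx => ?_)
    rw [ENNReal.ofReal_rpow_of_pos (hx.trans htx)]
  rw [h1, ← ofReal_integral_eq_lintegral_ofReal (integrableOn_Ioi_rpow_of_lt ha hx)]
  · rw [integral_Ioi_rpow_of_lt ha hx]
  · filter_upwards [self_mem_ae_restrict measurableSet_Ioi] with t htx
    exact Real.rpow_nonneg (hx.trans htx).le _

lemma rpow_half_sq (A : ℝ≥0∞) : (A ^ (1/2:ℝ)) ^ (2:ℝ) = A := by
  rw [← ENNReal.rpow_mul]; norm_num

/-- Hardy-type inequality for the tail averaging operator, in `ℝ≥0∞`. -/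
lemma hardy (s : ℝ) (hs : -(1/2 : ℝ) < s) :
    ∃ C : ℝ≥0∞, C ≠ ⊤ ∧ ∀ F : ℝ → ℝ≥0∞, Measurable F →
      ∫⁻ x in Ioi (0:ℝ), (ENNReal.ofReal x ^ s * ∫⁻ t in Ioi x, F t) ^ (2:ℝ)
        ≤ C * ∫⁻ t in Ioi (0:ℝ), (ENNReal.ofReal t ^ (s+1) * F t) ^ (2:ℝ) := by
  set ε : ℝ := s + 1/2 with hε
  have hε0 : 0 < ε := by simp only [hε]; linarith
  refine ⟨ENNReal.ofReal (1/ε) * ENNReal.ofReal (1/ε), by finiteness, fun F hF => ?_⟩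
  set G : ℝ → ℝ≥0∞ := fun t => ENNReal.ofReal t ^ (1+ε) * F t ^ (2:ℝ) with hG
  have hGmeas : Measurable G := (measurable_W _).mul (hF.pow_const _)
  -- Step 1: pointwise Cauchy-Schwarz bound on the tail
  have key : ∀ x ∈ Ioi (0:ℝ),
      (ENNReal.ofReal x ^ s * ∫⁻ t in Ioi x, F t) ^ (2:ℝ)
        ≤ ENNReal.ofReal (1/ε) * (ENNReal.ofReal x ^ (2*s - ε) * ∫⁻ t in Ioi x, G t) := by
    intro x hx
    rw [mem_Ioi] at hx
    have hxne : ENNReal.ofReal x ≠ 0 := by simp [hx]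
    have hxnt : ENNReal.ofReal x ≠ ⊤ := ENNReal.ofReal_ne_top
    -- Cauchy-Schwarz
    have hsq : ∀ t ∈ Ioi x, ((fun t => ENNReal.ofReal t ^ ((1+ε)/2) * F t) t) ^ (2:ℝ) = G t := by
      intro t _
      rw [ENNReal.mul_rpow_of_nonneg _ _ (by norm_num : (0:ℝ) ≤ 2), ← ENNReal.rpow_mul, hG]
      norm_num
    have hsq2 : ∀ t ∈ Ioi x, ((fun t => ENNReal.ofReal t ^ (-((1+ε)/2))) t) ^ (2:ℝ)
        = ENNReal.ofReal t ^ (-(1+ε)) := by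
      intro t _
      rw [← ENNReal.rpow_mul]
      norm_num
    have tail : (∫⁻ t in Ioi x, F t)
        ≤ (∫⁻ t in Ioi x, G t) ^ (1/2:ℝ)
          * (∫⁻ t in Ioi x, ENNReal.ofReal t ^ (-(1+ε))) ^ (1/2:ℝ) := by
      have heq : ∫⁻ t in Ioi x, F t
          = ∫⁻ t in Ioi x, ((fun t => ENNReal.ofReal t ^ ((1+ε)/2) * F t) *
              (fun t => ENNReal.ofReal t ^ (-((1+ε)/2)))) t := by
        refine setLIntegral_congr_fun measurableSet_Ioi (fun t htx => ?_)
        have htpos : (0:ℝ) < t := hx.trans htx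
        simp only [Pi.mul_apply]
        rw [ENNReal.rpow_neg, mul_right_comm,
          ENNReal.mul_inv_cancel (ENNReal.rpow_pos (by simp [htpos]) ENNReal.ofReal_ne_top).ne'
            (ENNReal.rpow_ne_top_of_nonneg (by positivity) ENNReal.ofReal_ne_top), one_mul]
      have hconj : (2:ℝ).HolderConjugate 2 := by constructor <;> norm_num
      rw [heq]
      refine le_trans (ENNReal.lintegral_mul_le_Lp_mul_Lq _ hconj
        (((measurable_W _).mul hF).aemeasurable) ((measurable_W _).aemeasurable)) ?_
      rw [setLIntegral_congr_fun measurableSet_Ioi hsq,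
        setLIntegral_congr_fun measurableSet_Ioi hsq2]
    have tailint : ∫⁻ t in Ioi x, ENNReal.ofReal t ^ (-(1+ε))
        = ENNReal.ofReal (1/ε) * ENNReal.ofReal x ^ (-ε) := by
      rw [lintegral_W_Ioi _ (by linarith) x hx]
      have h2 : -(1+ε) + 1 = -ε := by ring
      rw [h2, ENNReal.ofReal_rpow_of_pos hx, ← ENNReal.ofReal_mul (by positivity)]
      rw [Real.rpow_neg hx.le]
      congr 1
      field_simp
    calc (ENNReal.ofReal x ^ s * ∫⁻ t in Ioi x, F t) ^ (2:ℝ)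
        ≤ (ENNReal.ofReal x ^ s * ((∫⁻ t in Ioi x, G t) ^ (1/2:ℝ) *
            (ENNReal.ofReal (1/ε) * ENNReal.ofReal x ^ (-ε)) ^ (1/2:ℝ))) ^ (2:ℝ) := by
          gcongr
          rw [← tailint]; exact tail
      _ = ENNReal.ofReal (1/ε) * (ENNReal.ofReal x ^ (2*s - ε) * ∫⁻ t in Ioi x, G t) := by
          rw [ENNReal.mul_rpow_of_nonneg _ _ (by norm_num : (0:ℝ) ≤ 2),
            ENNReal.mul_rpow_of_nonneg _ _ (by norm_num : (0:ℝ) ≤ 2),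
            rpow_half_sq, rpow_half_sq, ← ENNReal.rpow_mul]
          rw [show (2*s - ε) = s*2 + (-ε) by ring, ENNReal.rpow_add _ _ hxne hxnt]
          ring
  -- Step 2: integrate and apply Tonelli
  have hWne : ∀ x : ℝ, 0 < x → ENNReal.ofReal x ^ (2*s-ε) ≠ ⊤ := by
    intro x hx
    simp [ENNReal.rpow_eq_top_iff, hx, ENNReal.ofReal_eq_zero, not_lt.2 hx.le]
  calc ∫⁻ x in Ioi (0:ℝ), (ENNReal.ofReal x ^ s * ∫⁻ t in Ioi x, F t) ^ (2:ℝ)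
      ≤ ∫⁻ x in Ioi (0:ℝ),
          ENNReal.ofReal (1/ε) * (ENNReal.ofReal x ^ (2*s - ε) * ∫⁻ t in Ioi x, G t) :=
        setLIntegral_mono' measurableSet_Ioi key
    _ = ENNReal.ofReal (1/ε) * ∫⁻ x in Ioi (0:ℝ),
          ENNReal.ofReal x ^ (2*s - ε) * ∫⁻ t in Ioi x, G t :=
        lintegral_const_mul' _ _ ENNReal.ofReal_ne_top
    _ = ENNReal.ofReal (1/ε) * ∫⁻ x in Ioi (0:ℝ), ∫⁻ t in Ioi (0:ℝ),
          ENNReal.ofReal x ^ (2*s - ε) * (Ioi x).indicator G t := by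
        congr 1
        refine setLIntegral_congr_fun measurableSet_Ioi (fun x hx => ?_)
        rw [lintegral_const_mul' _ _ (hWne x (mem_Ioi.mp hx)), lintegral_indicator measurableSet_Ioi,
          Measure.restrict_restrict measurableSet_Ioi,
          inter_eq_self_of_subset_left (Ioi_subset_Ioi (le_of_lt (mem_Ioi.mp hx)))]
    _ = ENNReal.ofReal (1/ε) * ∫⁻ t in Ioi (0:ℝ), ∫⁻ x in Ioi (0:ℝ),
          ENNReal.ofReal x ^ (2*s - ε) * (Ioi x).indicator G t := by
        congr 1
        refine lintegral_lintegral_swap ?_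
        have : (Function.uncurry fun x t =>
            ENNReal.ofReal x ^ (2*s - ε) * (Ioi x).indicator G t)
            = fun p : ℝ × ℝ => ENNReal.ofReal p.1 ^ (2*s - ε) *
                ({q : ℝ × ℝ | q.1 < q.2}.indicator (fun q => G q.2) p) := by
          funext p
          by_cases h : p.1 < p.2 <;>
            simp [Function.uncurry, Set.indicator_apply, h, Set.mem_Ioi, Set.mem_setOf_eq]
        rw [this]
        exact (((measurable_W _).comp measurable_fst).mul
          ((hGmeas.comp measurable_snd).indicator
            (measurableSet_lt measurable_fst measurable_snd))).aemeasurable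
    _ = ENNReal.ofReal (1/ε) * ∫⁻ t in Ioi (0:ℝ),
          ENNReal.ofReal (1/ε) * (ENNReal.ofReal t ^ ε * G t) := by
        congr 1
        refine setLIntegral_congr_fun measurableSet_Ioi (fun t ht => ?_)
        have h1 : ∀ x : ℝ, ENNReal.ofReal x ^ (2*s - ε) * (Ioi x).indicator G t
            = (Iio t).indicator (fun x => ENNReal.ofReal x ^ (2*s - ε)) x * G t := by
          intro x
          by_cases h : x < t <;>
            simp [Set.indicator_apply, h, Set.mem_Ioi, Set.mem_Iio, mul_comm]
        simp only [h1]
        rw [lintegral_mul_const _ ((measurable_W _).indicator measurableSet_Iio),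
          lintegral_indicator measurableSet_Iio,
          Measure.restrict_restrict measurableSet_Iio,
          show Iio t ∩ Ioi (0:ℝ) = Ioo 0 t by ext y; simp [and_comm],
          lintegral_W_Ioo _ (by simp only [hε]; linarith) t (mem_Ioi.mp ht),
          show 2*s - ε + 1 = ε by simp only [hε]; ring]
        rw [show t ^ ε / ε = 1/ε * t^ε by field_simp,
          ENNReal.ofReal_mul (by positivity), ENNReal.ofReal_rpow_of_pos (mem_Ioi.mp ht)]
        ring
    _ = ENNReal.ofReal (1/ε) * ENNReal.ofReal (1/ε) *
          ∫⁻ t in Ioi (0:ℝ), (ENNReal.ofReal t ^ (s+1) * F t) ^ (2:ℝ) := by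
        rw [lintegral_const_mul' _ _ ENNReal.ofReal_ne_top, ← mul_assoc]
        congr 1
        refine setLIntegral_congr_fun measurableSet_Ioi (fun t ht => ?_)
        have ht' : (0:ℝ) < t := mem_Ioi.mp ht
        have htne : ENNReal.ofReal t ≠ 0 := by simp [ht']
        rw [ENNReal.mul_rpow_of_nonneg _ _ (by norm_num : (0:ℝ) ≤ 2), ← ENNReal.rpow_mul, hG,
          ← mul_assoc, ← ENNReal.rpow_add _ _ htne ENNReal.ofReal_ne_top,
          show ε + (1+ε) = (s+1)*2 by simp only [hε]; ring]


noncomputable def Qn (s : ℝ) (u : ℝ → ℂ) : ℝ≥0∞ :=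
  (∫⁻ x in Ioi (0:ℝ), (ENNReal.ofReal x ^ s * ‖u x‖₊) ^ (2:ℝ)) ^ (1/2:ℝ)

lemma Qn_eq_eLpNorm (s : ℝ) (u : ℝ → ℂ) :
    Qn s u = eLpNorm (fun x => ((x ^ s : ℝ) : ℂ) * u x) 2 (volume.restrict (Ioi 0)) := by
  rw [eLpNorm_eq_lintegral_rpow_enorm_toReal (by norm_num) (by norm_num), Qn]
  norm_num
  congr 1
  refine setLIntegral_congr_fun measurableSet_Ioi (fun x hx => ?_)
  congr 1
  congr 1
  rw [ENNReal.ofReal_rpow_of_pos (mem_Ioi.mp hx), ← ofReal_norm,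
    Complex.norm_real, Real.norm_of_nonneg (Real.rpow_nonneg (le_of_lt (mem_Ioi.mp hx)) s)]

lemma enorm_le_tail (g g' : ℝ → ℂ) (hg : ∀ x ∈ Ioi (0:ℝ), HasDerivAt g (g' x) x)
    (hg'c : ContinuousOn g' (Ioi 0)) (ρ : ℝ) (hρ : ∀ x, ρ ≤ x → g x = 0)
    (x : ℝ) (hx : 0 < x) : (‖g x‖₊ : ℝ≥0∞) ≤ ∫⁻ t in Ioi x, (‖g' t‖₊ : ℝ≥0∞) := by
  set b := max ρ (x+1) with hb
  have hxb : x ≤ b := le_trans (by linarith) (le_max_right _ _)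
  have hgb : g b = 0 := hρ _ (le_max_left _ _)
  have hIcc : uIcc x b ⊆ Ioi (0:ℝ) := by
    rw [uIcc_of_le hxb]
    intro t ht
    exact lt_of_lt_of_le hx ht.1
  have hint : IntervalIntegrable g' volume x b := (hg'c.mono hIcc).intervalIntegrable
  have hftc := intervalIntegral.integral_eq_sub_of_hasDerivAt
    (fun t ht => hg t (hIcc ht)) hint
  have h1 : ‖g x‖ = ‖∫ t in x..b, g' t‖ := by rw [hftc, hgb, zero_sub, norm_neg]
  have h2 : ‖g x‖ ≤ ∫ t in x..b, ‖g' t‖ :=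
    h1 ▸ intervalIntegral.norm_integral_le_integral_norm hxb
  have hnint : IntegrableOn (fun t => ‖g' t‖) (Ioc x b) volume := by
    rw [← intervalIntegrable_iff_integrableOn_Ioc_of_le hxb]
    exact hint.norm
  calc (‖g x‖₊ : ℝ≥0∞) = ENNReal.ofReal ‖g x‖ := (ofReal_norm _).symm
    _ ≤ ENNReal.ofReal (∫ t in x..b, ‖g' t‖) := ENNReal.ofReal_le_ofReal h2
    _ = ∫⁻ t in Ioc x b, ENNReal.ofReal ‖g' t‖ := by
        rw [intervalIntegral.integral_of_le hxb]
        exact ofReal_integral_eq_lintegral_ofReal hnint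
          (.of_forall fun t => norm_nonneg _)
    _ ≤ ∫⁻ t in Ioi x, (‖g' t‖₊ : ℝ≥0∞) := by
        simp_rw [ofReal_norm]
        exact lintegral_mono_set Ioc_subset_Ioi_self

lemma hardy_step (s : ℝ) (hs : -(1/2:ℝ) < s) :
    ∃ C : ℝ≥0∞, C ≠ ⊤ ∧ ∀ (g g' : ℝ → ℂ),
      (∀ x ∈ Ioi (0:ℝ), HasDerivAt g (g' x) x) → ContinuousOn g' (Ioi 0) →
      (∃ ρ : ℝ, ∀ x, ρ ≤ x → g x = 0) →
      Qn s g ≤ C * Qn (s+1) g' := by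
  obtain ⟨C, hC, hineq⟩ := hardy s hs
  refine ⟨C ^ (1/2:ℝ), ENNReal.rpow_ne_top_of_nonneg (by norm_num) hC, fun g g' hg hg'c ⟨ρ, hρ⟩ => ?_⟩
  have hF : AEMeasurable (fun t => (‖g' t‖₊ : ℝ≥0∞)) (volume.restrict (Ioi 0)) :=
    (hg'c.aemeasurable measurableSet_Ioi).enorm
  set F : ℝ → ℝ≥0∞ := hF.mk _ with hFdef
  have hFmeas : Measurable F := hF.measurable_mk
  have hFeq : (fun t => (‖g' t‖₊ : ℝ≥0∞)) =ᵐ[volume.restrict (Ioi 0)] F := hF.ae_eq_mk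
  have key := hineq F hFmeas
  have tail_eq : ∀ x : ℝ, 0 < x →
      (∫⁻ t in Ioi x, F t) = ∫⁻ t in Ioi x, (‖g' t‖₊ : ℝ≥0∞) := by
    intro x hx
    refine lintegral_congr_ae ?_
    exact (hFeq.filter_mono (ae_mono (Measure.restrict_mono (Ioi_subset_Ioi hx.le) le_rfl))).symm
  have hL : ∫⁻ x in Ioi (0:ℝ), (ENNReal.ofReal x ^ s * ‖g x‖₊) ^ (2:ℝ)
      ≤ ∫⁻ x in Ioi (0:ℝ), (ENNReal.ofReal x ^ s * ∫⁻ t in Ioi x, F t) ^ (2:ℝ) := by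
    refine setLIntegral_mono' measurableSet_Ioi fun x hx => ?_
    have hx' : (0:ℝ) < x := mem_Ioi.mp hx
    gcongr
    rw [tail_eq x hx']
    exact enorm_le_tail g g' hg hg'c ρ hρ x hx'
  have hR : ∫⁻ t in Ioi (0:ℝ), (ENNReal.ofReal t ^ (s+1) * F t) ^ (2:ℝ)
      = ∫⁻ t in Ioi (0:ℝ), (ENNReal.ofReal t ^ (s+1) * ‖g' t‖₊) ^ (2:ℝ) := by
    refine lintegral_congr_ae ?_
    filter_upwards [hFeq] with t ht
    rw [ht]
  rw [Qn, Qn, ← hR]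
  calc (∫⁻ x in Ioi (0:ℝ), (ENNReal.ofReal x ^ s * ‖g x‖₊) ^ (2:ℝ)) ^ (1/2:ℝ)
      ≤ (C * ∫⁻ t in Ioi (0:ℝ), (ENNReal.ofReal t ^ (s+1) * F t) ^ (2:ℝ)) ^ (1/2:ℝ) := by
        gcongr
        exact hL.trans key
    _ = C ^ (1/2:ℝ) * (∫⁻ t in Ioi (0:ℝ), (ENNReal.ofReal t ^ (s+1) * F t) ^ (2:ℝ)) ^ (1/2:ℝ) :=
        ENNReal.mul_rpow_of_nonneg _ _ (by norm_num)



lemma vanish_iter' (f : ℝ → ℂ) (ρ : ℝ) (hρ : ∀ x, ρ ≤ x → f x = 0) (k : ℕ) :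
    ∀ x, max ρ 0 < x → iteratedDerivWithin k f (Ioi 0) x = 0 := by
  induction k with
  | zero => intro x hx; simpa using hρ x (le_of_lt (lt_of_le_of_lt (le_max_left _ _) hx))
  | succ k ih =>
    intro x hx
    have hx0 : (0:ℝ) < x := lt_of_le_of_lt (le_max_right _ _) hx
    rw [iteratedDerivWithin_succ,
      derivWithin_of_mem_nhds (Ioi_mem_nhds hx0)]
    have hev : iteratedDerivWithin k f (Ioi 0) =ᶠ[nhds x] (fun _ => (0:ℂ)) := by
      filter_upwards [Ioi_mem_nhds hx] with y hy
      exact ih y hy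
    rw [hev.deriv_eq, deriv_const]

lemma vanish_iter (f : ℝ → ℂ) (ρ : ℝ) (hρ : ∀ x, ρ ≤ x → f x = 0) (k : ℕ) :
    ∀ x, max ρ 0 + 1 ≤ x → iteratedDerivWithin k f (Ioi 0) x = 0 :=
  fun x hx => vanish_iter' f ρ hρ k x (by linarith)

lemma hasDerivAt_iter (r k : ℕ) (hk : k < r) (f : ℝ → ℂ)
    (hf : ContDiffOn ℝ (r : ℕ∞) f (Ioi 0)) (x : ℝ) (hx : 0 < x) :
    HasDerivAt (iteratedDerivWithin k f (Ioi 0))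
      (iteratedDerivWithin (k+1) f (Ioi 0) x) x := by
  have hd : DifferentiableOn ℝ (iteratedDerivWithin k f (Ioi 0)) (Ioi 0) :=
    hf.differentiableOn_iteratedDerivWithin (by exact_mod_cast hk) (uniqueDiffOn_Ioi 0)
  have hda : DifferentiableAt ℝ (iteratedDerivWithin k f (Ioi 0)) x :=
    (hd x hx).differentiableAt (Ioi_mem_nhds hx)
  have h1 : iteratedDerivWithin (k+1) f (Ioi 0) x
      = deriv (iteratedDerivWithin k f (Ioi 0)) x := by
    rw [iteratedDerivWithin_succ,
      derivWithin_of_mem_nhds (Ioi_mem_nhds hx)]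
  rw [h1]
  exact hda.hasDerivAt

lemma hardy_chain (r : ℕ) (n : ℕ) : ∀ (k : ℕ) (s : ℝ), k + n ≤ r → -(1/2:ℝ) < s →
    ∃ C : ℝ≥0∞, C ≠ ⊤ ∧ ∀ f : ℝ → ℂ, ContDiffOn ℝ (r : ℕ∞) f (Ioi 0) →
      (∃ ρ : ℝ, ∀ x, ρ ≤ x → f x = 0) →
      Qn s (iteratedDerivWithin k f (Ioi 0))
        ≤ C * Qn (s + n) (iteratedDerivWithin (k + n) f (Ioi 0)) := by
  induction n with
  | zero =>
    intro k s _ _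
    refine ⟨1, ENNReal.one_ne_top, fun f _ _ => ?_⟩
    simp
  | succ n ih =>
    intro k s hkn hs
    obtain ⟨C₁, hC₁, h₁⟩ := hardy_step s hs
    obtain ⟨C₂, hC₂, h₂⟩ := ih (k+1) (s+1) (by omega) (by linarith)
    refine ⟨C₁ * C₂, ENNReal.mul_ne_top hC₁ hC₂, fun f hf hvan => ?_⟩
    obtain ⟨ρ, hρ⟩ := hvan
    have hkr : k < r := by omega
    have step1 : Qn s (iteratedDerivWithin k f (Ioi 0))
        ≤ C₁ * Qn (s+1) (iteratedDerivWithin (k+1) f (Ioi 0)) := by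
      refine h₁ _ _ (fun x hx => hasDerivAt_iter r k hkr f hf x (mem_Ioi.mp hx)) ?_ ?_
      · exact hf.continuousOn_iteratedDerivWithin (by exact_mod_cast Nat.succ_le_of_lt hkr)
          (uniqueDiffOn_Ioi 0)
      · exact ⟨max ρ 0 + 1, fun x hx => vanish_iter f ρ hρ k x hx⟩
    have step2 : Qn (s+1) (iteratedDerivWithin (k+1) f (Ioi 0))
        ≤ C₂ * Qn (s+1+n) (iteratedDerivWithin (k+1+n) f (Ioi 0)) :=
      h₂ f hf ⟨ρ, hρ⟩
    have hrw1 : s + 1 + (n:ℝ) = s + ((n:ℕ)+1 : ℕ) := by push_cast; ring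
    have hrw2 : k + 1 + n = k + (n+1) := by omega
    calc Qn s (iteratedDerivWithin k f (Ioi 0))
        ≤ C₁ * Qn (s+1) (iteratedDerivWithin (k+1) f (Ioi 0)) := step1
      _ ≤ C₁ * (C₂ * Qn (s+1+n) (iteratedDerivWithin (k+1+n) f (Ioi 0))) := by
          gcongr
      _ = C₁ * C₂ * Qn (s + ((n:ℕ)+1:ℕ)) (iteratedDerivWithin (k+(n+1)) f (Ioi 0)) := by
          rw [← hrw1, ← hrw2, mul_assoc]


lemma leibniz : ∀ (n : ℕ) (f g : ℝ → ℂ), ContDiffOn ℝ (n:ℕ∞) f (Ioi 0) →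
    ContDiffOn ℝ (n:ℕ∞) g (Ioi 0) → ∀ x ∈ Ioi (0:ℝ),
    iteratedDerivWithin n (fun y => f y * g y) (Ioi 0) x
      = ∑ k ∈ Finset.range (n+1), (n.choose k : ℂ) *
          (iteratedDerivWithin (n-k) f (Ioi 0) x * iteratedDerivWithin k g (Ioi 0) x) := by
  intro n
  induction n with
  | zero => intro f g _ _ x _; simp
  | succ n ih =>
    intro f g hf hg x hx
    have hx' : (0:ℝ) < x := mem_Ioi.mp hx
    have hf' : ContDiffOn ℝ (n:ℕ∞) f (Ioi 0) := hf.of_le (by exact_mod_cast Nat.le_succ n)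
    have hg' : ContDiffOn ℝ (n:ℕ∞) g (Ioi 0) := hg.of_le (by exact_mod_cast Nat.le_succ n)
    have heq : EqOn (iteratedDerivWithin n (fun y => f y * g y) (Ioi 0))
        (fun y => ∑ k ∈ Finset.range (n+1), (n.choose k : ℂ) *
          (iteratedDerivWithin (n-k) f (Ioi 0) y * iteratedDerivWithin k g (Ioi 0) y))
        (Ioi 0) := fun y hy => ih f g hf' hg' y hy
    rw [iteratedDerivWithin_succ,
      derivWithin_congr heq (heq hx),
      derivWithin_of_mem_nhds (Ioi_mem_nhds hx')]
    have hterm : ∀ k ∈ Finset.range (n+1), HasDerivAt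
        (fun y => (n.choose k : ℂ) *
          (iteratedDerivWithin (n-k) f (Ioi 0) y * iteratedDerivWithin k g (Ioi 0) y))
        ((n.choose k : ℂ) *
          (iteratedDerivWithin (n-k+1) f (Ioi 0) x * iteratedDerivWithin k g (Ioi 0) x
           + iteratedDerivWithin (n-k) f (Ioi 0) x * iteratedDerivWithin (k+1) g (Ioi 0) x)) x := by
      intro k hk
      rw [Finset.mem_range] at hk
      have hu : HasDerivAt (iteratedDerivWithin (n-k) f (Ioi 0))
          (iteratedDerivWithin (n-k+1) f (Ioi 0) x) x :=
        hasDerivAt_iter (n+1) (n-k) (by omega) f hf x hx'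
      have hv : HasDerivAt (iteratedDerivWithin k g (Ioi 0))
          (iteratedDerivWithin (k+1) g (Ioi 0) x) x :=
        hasDerivAt_iter (n+1) k (by omega) g hg x hx'
      exact (hu.mul hv).const_mul _
    have hsum : HasDerivAt
        (fun y => ∑ k ∈ Finset.range (n+1), (n.choose k : ℂ) *
          (iteratedDerivWithin (n-k) f (Ioi 0) y * iteratedDerivWithin k g (Ioi 0) y))
        (∑ k ∈ Finset.range (n+1), (n.choose k : ℂ) *
          (iteratedDerivWithin (n-k+1) f (Ioi 0) x * iteratedDerivWithin k g (Ioi 0) x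
           + iteratedDerivWithin (n-k) f (Ioi 0) x * iteratedDerivWithin (k+1) g (Ioi 0) x)) x :=
      HasDerivAt.fun_sum hterm
    rw [hsum.deriv]
    -- now pure algebra
    set T : ℕ → ℂ := fun k => iteratedDerivWithin (n+1-k) f (Ioi 0) x *
      iteratedDerivWithin k g (Ioi 0) x with hT
    have hTsum : ∑ k ∈ Finset.range (n+1), (n.choose k : ℂ) *
          (iteratedDerivWithin (n-k+1) f (Ioi 0) x * iteratedDerivWithin k g (Ioi 0) x
           + iteratedDerivWithin (n-k) f (Ioi 0) x * iteratedDerivWithin (k+1) g (Ioi 0) x)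
        = ∑ k ∈ Finset.range (n+1), (n.choose k : ℂ) * (T k + T (k+1)) := by
      refine Finset.sum_congr rfl fun k hk => ?_
      rw [Finset.mem_range] at hk
      have e1 : n - k + 1 = n + 1 - k := by omega
      have e2 : n - k = n + 1 - (k+1) := by omega
      rw [hT, e1, e2]
    rw [hTsum]
    have goal_rhs : ∑ k ∈ Finset.range (n+1+1), ((n+1).choose k : ℂ) *
          (iteratedDerivWithin (n+1-k) f (Ioi 0) x * iteratedDerivWithin k g (Ioi 0) x)
        = ∑ k ∈ Finset.range (n+2), ((n+1).choose k : ℂ) * T k := rfl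
    rw [goal_rhs]
    -- binomial recurrence shuffle
    rw [Finset.sum_range_succ' (fun k => ((n+1).choose k : ℂ) * T k) (n+1)]
    have hchoose : ∀ k, (((n+1).choose (k+1) : ℕ) : ℂ) = (n.choose k : ℂ) + (n.choose (k+1) : ℂ) := by
      intro k
      rw [Nat.choose_succ_succ]
      push_cast
      ring
    have hsplit : ∑ k ∈ Finset.range (n+1), (((n+1).choose (k+1) : ℕ) : ℂ) * T (k+1)
        = ∑ k ∈ Finset.range (n+1), (n.choose k : ℂ) * T (k+1)
          + ∑ k ∈ Finset.range (n+1), (n.choose (k+1) : ℂ) * T (k+1) := by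
      rw [← Finset.sum_add_distrib]
      refine Finset.sum_congr rfl fun k _ => ?_
      rw [hchoose k, add_mul]
    rw [hsplit]
    have htail : ∑ k ∈ Finset.range (n+1), (n.choose (k+1) : ℂ) * T (k+1) + ((n+1).choose 0 : ℂ) * T 0
        = ∑ k ∈ Finset.range (n+1), (n.choose k : ℂ) * T k := by
      have h0 : ((n+1).choose 0 : ℂ) * T 0 = (n.choose 0 : ℂ) * T 0 := by simp
      rw [h0, ← Finset.sum_range_succ' (fun k => (n.choose k : ℂ) * T k) (n+1)]
      rw [Finset.sum_range_succ]
      simp [Nat.choose_succ_self]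
    have expand : ∑ k ∈ Finset.range (n+1), (n.choose k : ℂ) * (T k + T (k+1))
        = ∑ k ∈ Finset.range (n+1), (n.choose k : ℂ) * T k
          + ∑ k ∈ Finset.range (n+1), (n.choose k : ℂ) * T (k+1) := by
      rw [← Finset.sum_add_distrib]
      refine Finset.sum_congr rfl fun k _ => ?_
      ring
    rw [expand, ← htail]
    ring



lemma phi_contDiffOn (q : ℝ) (n : ℕ∞) :
    ContDiffOn ℝ (n : ℕ∞) (fun y : ℝ => ((y ^ q : ℝ) : ℂ)) (Ioi 0) := by
  intro x hx
  exact (Complex.ofRealCLM.contDiff.contDiffAt.comp x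
    (Real.contDiffAt_rpow_const_of_ne (ne_of_gt (mem_Ioi.mp hx)))).contDiffWithinAt

lemma iter_rpow (q : ℝ) : ∀ (j : ℕ), ∀ x ∈ Ioi (0:ℝ),
    iteratedDerivWithin j (fun y : ℝ => ((y ^ q : ℝ) : ℂ)) (Ioi 0) x
      = (((∏ i ∈ Finset.range j, (q - i)) : ℝ) : ℂ) * ((x ^ (q - j) : ℝ) : ℂ) := by
  intro j
  induction j with
  | zero => intro x hx; simp
  | succ j ih =>
    intro x hx
    have hx' : (0:ℝ) < x := mem_Ioi.mp hx
    have heq : EqOn (iteratedDerivWithin j (fun y : ℝ => ((y ^ q : ℝ) : ℂ)) (Ioi 0))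
        (fun y => (((∏ i ∈ Finset.range j, (q - i)) : ℝ) : ℂ) * ((y ^ (q - j) : ℝ) : ℂ))
        (Ioi 0) := fun y hy => ih y hy
    rw [iteratedDerivWithin_succ,
      derivWithin_congr heq (heq hx),
      derivWithin_of_mem_nhds (Ioi_mem_nhds hx')]
    have hd : HasDerivAt (fun y : ℝ => (((∏ i ∈ Finset.range j, (q - i)) : ℝ) : ℂ) *
        ((y ^ (q - j) : ℝ) : ℂ))
        ((((∏ i ∈ Finset.range j, (q - i)) : ℝ) : ℂ) *
          (((q - j) * x ^ (q - j - 1) : ℝ) : ℂ)) x :=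
      ((Real.hasDerivAt_rpow_const (Or.inl (ne_of_gt hx'))).ofReal_comp).const_mul _
    rw [hd.deriv, Finset.prod_range_succ]
    have he : q - j - 1 = q - (j+1 : ℕ) := by push_cast; ring
    rw [he]
    push_cast
    ring



lemma Qn_congr (s : ℝ) {u v : ℝ → ℂ} (h : EqOn u v (Ioi 0)) : Qn s u = Qn s v := by
  rw [Qn, Qn]
  congr 1
  exact setLIntegral_congr_fun measurableSet_Ioi (fun x hx => by rw [h hx])

lemma key (r : ℕ) (q m : ℝ) (hm : (r:ℝ) - 1/2 < m + q) :
    ∃ C : ℝ≥0∞, C ≠ 0 ∧ C ≠ ⊤ ∧ ∀ f : ℝ → ℂ, ContDiffOn ℝ (r:ℕ∞) f (Ioi 0) →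
      (∃ ρ : ℝ, ∀ x, ρ ≤ x → f x = 0) →
      Qn m (iteratedDerivWithin r (fun y => ((y ^ q : ℝ) : ℂ) * f y) (Ioi 0))
        ≤ C * Qn (m+q) (iteratedDerivWithin r f (Ioi 0)) := by
  set a : ℕ → ℂ := fun k => (r.choose k : ℂ) * (((∏ i ∈ Finset.range (r-k), (q - i)) : ℝ) : ℂ)
    with ha
  set sk : ℕ → ℝ := fun k => m + (q - ((r-k : ℕ) : ℝ)) with hsk
  have hchain : ∀ k : ℕ, ∃ C : ℝ≥0∞, C ≠ ⊤ ∧ (k ≤ r → ∀ f : ℝ → ℂ,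
      ContDiffOn ℝ (r:ℕ∞) f (Ioi 0) → (∃ ρ : ℝ, ∀ x, ρ ≤ x → f x = 0) →
      Qn (sk k) (iteratedDerivWithin k f (Ioi 0))
        ≤ C * Qn (m+q) (iteratedDerivWithin r f (Ioi 0))) := by
    intro k
    by_cases hk : k ≤ r
    · have hs : -(1/2:ℝ) < sk k := by
        have h1 : ((r-k:ℕ):ℝ) ≤ (r:ℝ) := by exact_mod_cast Nat.sub_le r k
        simp only [hsk]
        linarith
      obtain ⟨C, hC, hineq⟩ := hardy_chain r (r-k) k (sk k) (by omega) hs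
      refine ⟨C, hC, fun _ f hf hvan => ?_⟩
      have h1 := hineq f hf hvan
      have e1 : k + (r - k) = r := by omega
      have e2 : sk k + ((r-k:ℕ):ℝ) = m + q := by simp only [hsk]; ring
      rwa [e1, e2] at h1
    · exact ⟨1, ENNReal.one_ne_top, fun hk' => absurd hk' hk⟩
  choose Ck hCk hCkineq using hchain
  set C0 : ℝ≥0∞ := ∑ k ∈ Finset.range (r+1), (‖a k‖₊ : ℝ≥0∞) * Ck k with hC0
  have hC0top : C0 ≠ ⊤ := by
    rw [hC0]
    refine (ENNReal.sum_lt_top.mpr fun k _ => ?_).ne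
    exact ENNReal.mul_lt_top ENNReal.coe_lt_top (hCk k).lt_top
  refine ⟨1 + C0, by simp, by simp [hC0top], fun f hf hvan => ?_⟩
  set φ : ℝ → ℂ := fun y => ((y ^ q : ℝ) : ℂ) with hφ
  set Dk : ℕ → ℝ → ℂ := fun k => iteratedDerivWithin k f (Ioi 0) with hDk
  set W : ℕ → ℝ → ℂ := fun k => a k • (fun x => ((x ^ (sk k) : ℝ) : ℂ) * Dk k x) with hW
  have hφc : ContDiffOn ℝ (r:ℕ∞) φ (Ioi 0) := phi_contDiffOn q r
  -- pointwise identity on Ioi 0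
  have step1 : ∀ x ∈ Ioi (0:ℝ),
      ((x ^ m : ℝ) : ℂ) * iteratedDerivWithin r (fun y => φ y * f y) (Ioi 0) x
        = ∑ k ∈ Finset.range (r+1), W k x := by
    intro x hx
    have hx' : (0:ℝ) < x := mem_Ioi.mp hx
    rw [leibniz r φ f hφc hf x hx, Finset.mul_sum]
    refine Finset.sum_congr rfl fun k hk => ?_
    rw [hW]
    simp only [Pi.smul_apply, smul_eq_mul]
    have hxe : ((x : ℝ) ^ (sk k) : ℝ) = x ^ m * x ^ (q - ((r-k:ℕ):ℝ)) := by
      rw [← Real.rpow_add hx']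
    rw [iter_rpow q (r-k) x hx, ha, hxe]
    push_cast
    ring
  -- seminorm estimates
  have hmeasW : ∀ k ∈ Finset.range (r+1), AEStronglyMeasurable (W k)
      (volume.restrict (Ioi 0)) := by
    intro k hk
    have hk' : k ≤ r := Nat.lt_succ_iff.mp (Finset.mem_range.mp hk)
    have hcont : ContinuousOn (fun x : ℝ => ((x ^ (sk k) : ℝ) : ℂ) * Dk k x) (Ioi 0) := by
      refine ContinuousOn.mul ?_ ?_
      · exact Complex.continuous_ofReal.comp_continuousOn
          (continuousOn_id.rpow_const fun x hx => Or.inl (ne_of_gt (mem_Ioi.mp hx)))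
      · exact hf.continuousOn_iteratedDerivWithin (by exact_mod_cast hk') (uniqueDiffOn_Ioi 0)
    exact (hcont.aestronglyMeasurable measurableSet_Ioi).const_smul _
  calc Qn m (iteratedDerivWithin r (fun y => ((y ^ q : ℝ) : ℂ) * f y) (Ioi 0))
      = eLpNorm (fun x => ((x ^ m : ℝ) : ℂ) *
          iteratedDerivWithin r (fun y => φ y * f y) (Ioi 0) x) 2
          (volume.restrict (Ioi 0)) := Qn_eq_eLpNorm m _
    _ = eLpNorm (∑ k ∈ Finset.range (r+1), W k) 2 (volume.restrict (Ioi 0)) := by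
        refine eLpNorm_congr_ae ?_
        rw [Filter.EventuallyEq]
        rw [ae_restrict_iff' measurableSet_Ioi]
        refine Filter.Eventually.of_forall fun x hx => ?_
        rw [step1 x hx, Finset.sum_apply]
    _ ≤ ∑ k ∈ Finset.range (r+1), eLpNorm (W k) 2 (volume.restrict (Ioi 0)) :=
        eLpNorm_sum_le hmeasW one_le_two
    _ ≤ ∑ k ∈ Finset.range (r+1), (‖a k‖₊ : ℝ≥0∞) * (Ck k *
          Qn (m+q) (iteratedDerivWithin r f (Ioi 0))) := by
        refine Finset.sum_le_sum fun k hk => ?_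
        have hk' : k ≤ r := Nat.lt_succ_iff.mp (Finset.mem_range.mp hk)
        rw [hW]
        simp only
        rw [eLpNorm_const_smul, ← Qn_eq_eLpNorm]
        have := hCkineq k hk' f hf hvan
        calc (‖a k‖₊ : ℝ≥0∞) • Qn (sk k) (Dk k)
            = (‖a k‖₊ : ℝ≥0∞) * Qn (sk k) (Dk k) := rfl
          _ ≤ (‖a k‖₊ : ℝ≥0∞) * (Ck k * Qn (m+q) (iteratedDerivWithin r f (Ioi 0))) :=
              mul_le_mul_right this _
    _ = C0 * Qn (m+q) (iteratedDerivWithin r f (Ioi 0)) := by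
        rw [hC0, Finset.sum_mul]
        refine Finset.sum_congr rfl fun k _ => ?_
        ring
    _ ≤ (1 + C0) * Qn (m+q) (iteratedDerivWithin r f (Ioi 0)) := by
        gcongr
        simp



lemma stmt_eq (s : ℝ) (u : ℝ → ℂ) :
    (∫⁻ x in Ioi (0:ℝ), ENNReal.ofReal (x ^ (2*s) * ‖u x‖^2)) ^ (1/2:ℝ) = Qn s u := by
  rw [Qn]
  congr 1
  refine setLIntegral_congr_fun measurableSet_Ioi (fun x hx => ?_)
  have hx' : (0:ℝ) < x := mem_Ioi.mp hx
  rw [ENNReal.mul_rpow_of_nonneg _ _ (by norm_num : (0:ℝ) ≤ 2), ← ENNReal.rpow_mul,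
    ENNReal.ofReal_rpow_of_pos hx',
    show (↑‖u x‖₊ : ℝ≥0∞) = ENNReal.ofReal ‖u x‖ from (ofReal_norm _).symm,
    ENNReal.ofReal_rpow_of_nonneg (norm_nonneg _) (by norm_num : (0:ℝ) ≤ 2),
    ← ENNReal.ofReal_mul (Real.rpow_nonneg hx'.le _)]
  congr 1
  rw [show s * 2 = 2 * s by ring]
  congr 1
  rw [show (2:ℝ) = ((2:ℕ):ℝ) by norm_num, Real.rpow_natCast]


end WNE


/-- Lemma 2.4(b): equivalence of the weighted norms `‖x^{m+p} h^{(r)}‖` and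
`‖x^m (x^p h)^{(r)}‖` on the half line. -/
theorem weighted_norm_equivalence
    (r : ℕ) (p m : ℝ) (hp : 0 ≤ p) (hm : (r : ℝ) - 1/2 < m) :
    ∃ C : ℝ, 1 ≤ C ∧
      ∀ h : ℝ → ℂ, ContDiffOn ℝ (r : ℕ∞) h (Set.Ioi 0) →
        (∃ ρ : ℝ, ∀ x, ρ ≤ x → h x = 0) →
        (ENNReal.ofReal C⁻¹ *
            (∫⁻ x in Set.Ioi (0:ℝ),
              ENNReal.ofReal (x ^ (2*m) *
                ‖iteratedDerivWithin r (fun y => ((y ^ p : ℝ) : ℂ) * h y) (Set.Ioi 0) x‖^2))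
              ^ (1/2 : ℝ)
          ≤ (∫⁻ x in Set.Ioi (0:ℝ),
              ENNReal.ofReal (x ^ (2*(m+p)) *
                ‖iteratedDerivWithin r h (Set.Ioi 0) x‖^2)) ^ (1/2 : ℝ)) ∧
        ((∫⁻ x in Set.Ioi (0:ℝ),
              ENNReal.ofReal (x ^ (2*(m+p)) *
                ‖iteratedDerivWithin r h (Set.Ioi 0) x‖^2)) ^ (1/2 : ℝ)
          ≤ ENNReal.ofReal C *
            (∫⁻ x in Set.Ioi (0:ℝ),
              ENNReal.ofReal (x ^ (2*m) *
                ‖iteratedDerivWithin r (fun y => ((y ^ p : ℝ) : ℂ) * h y) (Set.Ioi 0) x‖^2))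
              ^ (1/2 : ℝ)) := by
  classical
  obtain ⟨CB, hCB0, hCBt, hB⟩ := WNE.key r p m (by linarith)
  obtain ⟨CA, hCA0, hCAt, hA⟩ := WNE.key r (-p) (m+p) (by linarith)
  set C : ℝ := max 1 (max CA.toReal CB.toReal) with hC
  have hC1 : (1:ℝ) ≤ C := le_max_left _ _
  have hC0 : (0:ℝ) < C := lt_of_lt_of_le one_pos hC1
  have hCA_le : CA ≤ ENNReal.ofReal C := by
    rw [← ENNReal.ofReal_toReal hCAt]
    exact ENNReal.ofReal_le_ofReal ((le_max_left _ _).trans (le_max_right _ _))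
  have hCB_le : CB ≤ ENNReal.ofReal C := by
    rw [← ENNReal.ofReal_toReal hCBt]
    exact ENNReal.ofReal_le_ofReal ((le_max_right _ _).trans (le_max_right _ _))
  refine ⟨C, hC1, fun h hh hvan => ?_⟩
  set u : ℝ → ℂ := fun y => ((y ^ p : ℝ) : ℂ) * h y with hu
  have huc : ContDiffOn ℝ (r:ℕ∞) u (Set.Ioi 0) := (WNE.phi_contDiffOn p r).mul hh
  have huvan : ∃ ρ : ℝ, ∀ x, ρ ≤ x → u x = 0 := by
    obtain ⟨ρ, hρ⟩ := hvan
    exact ⟨ρ, fun x hx => by rw [hu]; simp [hρ x hx]⟩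
  -- inequality B : Qn m (D^r u) ≤ CB * Qn (m+p) (D^r h)
  have ineqB := hB h hh hvan
  -- inequality A : Qn (m+p) (D^r (φ_{-p} u)) ≤ CA * Qn (m+p+(-p)) (D^r u)
  have ineqA := hA u huc huvan
  have heqA : WNE.Qn (m+p) (iteratedDerivWithin r (fun y => ((y ^ (-p) : ℝ) : ℂ) * u y) (Set.Ioi 0))
      = WNE.Qn (m+p) (iteratedDerivWithin r h (Set.Ioi 0)) := by
    refine WNE.Qn_congr _ (iteratedDerivWithin_congr (fun y hy => ?_))
    have hy' : (0:ℝ) < y := mem_Ioi.mp hy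
    rw [hu]
    simp only
    rw [← mul_assoc, ← Complex.ofReal_mul, ← Real.rpow_add hy', neg_add_cancel,
      Real.rpow_zero, Complex.ofReal_one, one_mul]
  have hmp : m + p + -p = m := by ring
  rw [heqA, hmp] at ineqA
  rw [WNE.stmt_eq m, WNE.stmt_eq (m+p)]
  set QL := WNE.Qn m (iteratedDerivWithin r u (Set.Ioi 0)) with hQL
  set QR := WNE.Qn (m+p) (iteratedDerivWithin r h (Set.Ioi 0)) with hQR
  have ineqB' : QL ≤ ENNReal.ofReal C * QR :=
    le_trans ineqB (mul_le_mul_left hCB_le _)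
  have ineqA' : QR ≤ ENNReal.ofReal C * QL :=
    le_trans ineqA (mul_le_mul_left hCA_le _)
  constructor
  · calc ENNReal.ofReal C⁻¹ * QL
        ≤ ENNReal.ofReal C⁻¹ * (ENNReal.ofReal C * QR) := mul_le_mul_right ineqB' _
      _ = (ENNReal.ofReal C⁻¹ * ENNReal.ofReal C) * QR := by rw [mul_assoc]
      _ = QR := by
          rw [← ENNReal.ofReal_mul (by positivity), inv_mul_cancel₀ (ne_of_gt hC0),
            ENNReal.ofReal_one, one_mul]
  · exact ineqA'
end

section
/- Let n ≥ p ≥ 0 be real numbers with n ≥ 1. There exists a constant C depending only on n such that for every function h : (0,∞) → ℂ that is continuously differentiable on (0,∞) and vanishes for all sufficiently large x, one has ‖x^p h‖ ≤ C (‖x^n h‖ + ‖h'‖), the inequality being understood in [0,∞]. -/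
open MeasureTheory Set

lemma cs_aux {g : ℝ → ℝ} {s : Set ℝ} (hs : MeasurableSet s)
    (hvol : volume s ≤ 1) (hgi : IntegrableOn g s)
    (hgi2 : IntegrableOn (fun x => g x ^ 2) s)
    {b : ℝ} (hb : 0 ≤ b)
    (hgb : ∫ x in s, g x ^ 2 ≤ b) :
    ∫ x in s, g x ≤ Real.sqrt b := by
  have hsfin : volume s < ⊤ := lt_of_le_of_lt hvol ENNReal.one_lt_top
  have htR : (volume s).toReal ≤ 1 := by
    have := ENNReal.toReal_mono ENNReal.one_ne_top hvol
    simpa using this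
  refine le_of_forall_pos_le_add fun ε hε => ?_
  set c := Real.sqrt b + ε with hc
  have hsb : 0 ≤ Real.sqrt b := Real.sqrt_nonneg b
  have hc0 : 0 < c := by positivity
  have hbc : b ≤ c ^ 2 := by
    nlinarith [Real.sq_sqrt hb]
  have hconst : IntegrableOn (fun _ : ℝ => c ^ 2) s := by
    exact integrableOn_const hsfin.ne
  have key : ∫ x in s, g x ≤ ∫ x in s, (g x ^ 2 + c ^ 2) / (2 * c) := by
    refine setIntegral_mono_on hgi ((hgi2.add hconst).div_const _) hs fun x hx => ?_
    rw [le_div_iff₀ (by positivity)]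
    nlinarith [sq_nonneg (g x - c)]
  have calc2 : ∫ x in s, (g x ^ 2 + c ^ 2) / (2 * c)
      = ((∫ x in s, g x ^ 2) + c ^ 2 * (volume s).toReal) / (2 * c) := by
    rw [integral_div, integral_add hgi2 hconst, setIntegral_const, measureReal_def, smul_eq_mul]
    ring
  have : ∫ x in s, g x ≤ c := by
    rw [calc2] at key
    refine key.trans ?_
    rw [div_le_iff₀ (by positivity)]
    nlinarith [ENNReal.toReal_nonneg (a := volume s)]
  linarith


lemma pointwise_bound {h : ℝ → ℂ} (hc : ContDiffOn ℝ 1 h (Ioi 0))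
    {sa sb : ℝ} (hsa : 0 ≤ sa) (hsb : 0 ≤ sb)
    (hA : ∫ y in Ioc (1:ℝ) 2, ‖h y‖ ≤ sa)
    (hB1 : ∫ y in Ioc (1:ℝ) 2, ‖derivWithin h (Ioi 0) y‖ ≤ sb)
    (hB2 : ∀ x ∈ Ioc (0:ℝ) 1, ∫ y in Ioc x 1, ‖derivWithin h (Ioi 0) y‖ ≤ sb) :
    ∀ x ∈ Ioc (0:ℝ) 1, ‖h x‖ ≤ sa + 2 * sb := by
  set h' := derivWithin h (Ioi 0) with hh'
  have hcont : ContinuousOn h (Ioi 0) := hc.continuousOn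
  have h'cont : ContinuousOn h' (Ioi 0) :=
    hc.continuousOn_derivWithin isOpen_Ioi.uniqueDiffOn le_rfl
  have hd : ∀ t ∈ Ioi (0:ℝ), HasDerivAt h (h' t) t := by
    intro t ht
    have hdiff := (hc.differentiableOn one_ne_zero t ht).differentiableAt
      (isOpen_Ioi.mem_nhds ht)
    rw [hh', derivWithin_of_isOpen isOpen_Ioi ht]
    exact hdiff.hasDerivAt
  -- integrability of ‖h'‖ on compact subintervals of Ioi 0
  have h'int : ∀ u v : ℝ, 0 < u → IntegrableOn (fun y => ‖h' y‖) (Ioc u v) := by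
    intro u v hu
    have hsub : Icc u v ⊆ Ioi 0 := fun t ht => lt_of_lt_of_le hu ht.1
    exact (((h'cont.mono hsub).norm).integrableOn_compact isCompact_Icc).mono_set
      Ioc_subset_Icc_self
  -- FTC-based bound
  have nb : ∀ u v : ℝ, 0 < u → u ≤ v → ‖h v - h u‖ ≤ ∫ t in Ioc u v, ‖h' t‖ := by
    intro u v hu huv
    have hsub : Icc u v ⊆ Ioi 0 := fun t ht => lt_of_lt_of_le hu ht.1
    have hftc : h v - h u = ∫ t in u..v, h' t := by
      refine (intervalIntegral.integral_eq_sub_of_hasDerivAt (fun t ht => ?_) ?_).symm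
      · rw [uIcc_of_le huv] at ht
        exact hd t (hsub ht)
      · apply ContinuousOn.intervalIntegrable
        rw [uIcc_of_le huv]
        exact h'cont.mono hsub
    rw [hftc]
    calc ‖∫ t in u..v, h' t‖ ≤ ∫ t in u..v, ‖h' t‖ :=
          intervalIntegral.norm_integral_le_integral_norm huv
      _ = ∫ t in Ioc u v, ‖h' t‖ := intervalIntegral.integral_of_le huv
  -- bound for ‖h 1‖
  set K := ∫ y in Ioc (1:ℝ) 2, ‖h' y‖ with hK
  have hK0 : 0 ≤ K := setIntegral_nonneg measurableSet_Ioc fun y _ => norm_nonneg _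
  have hint_h : IntegrableOn (fun y => ‖h y‖) (Ioc (1:ℝ) 2) := by
    have hsub : Icc (1:ℝ) 2 ⊆ Ioi 0 := fun t ht => lt_of_lt_of_le one_pos ht.1
    exact (((hcont.mono hsub).norm).integrableOn_compact isCompact_Icc).mono_set
      Ioc_subset_Icc_self
  have hstep : ∀ y ∈ Ioc (1:ℝ) 2, ‖h 1‖ ≤ ‖h y‖ + K := by
    intro y hy
    have h1 : ‖h 1 - h y‖ ≤ K := by
      have := nb 1 y one_pos hy.1.le
      rw [norm_sub_rev]
      refine this.trans ?_
      exact setIntegral_mono_set (h'int 1 2 one_pos)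
        (Filter.Eventually.of_forall fun t => norm_nonneg _)
        ((Ioc_subset_Ioc_right hy.2).eventuallyLE)
    calc ‖h 1‖ ≤ ‖h y‖ + ‖h 1 - h y‖ := by
          have := norm_add_le (h y) (h 1 - h y); simpa using this
      _ ≤ ‖h y‖ + K := by linarith
  have hvol : (volume (Ioc (1:ℝ) 2)).toReal = 1 := by
    rw [Real.volume_Ioc]; norm_num
  have h1bound : ‖h 1‖ ≤ sa + sb := by
    have hmono : ∫ _ in Ioc (1:ℝ) 2, ‖h 1‖ ≤ ∫ y in Ioc (1:ℝ) 2, (‖h y‖ + K) := by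
      refine setIntegral_mono_on ?_ (hint_h.add ?_) measurableSet_Ioc hstep
      · exact integrableOn_const (by rw [Real.volume_Ioc]; norm_num)
      · exact integrableOn_const (by rw [Real.volume_Ioc]; norm_num)
    rw [setIntegral_const, measureReal_def, hvol, one_smul,
      integral_add hint_h (integrableOn_const (by rw [Real.volume_Ioc]; norm_num)),
      setIntegral_const, measureReal_def, hvol, one_smul] at hmono
    linarith
  intro x hx
  have h2 : ‖h x‖ ≤ ‖h 1‖ + ‖h 1 - h x‖ := by
    have := norm_add_le (h 1) (h x - h 1); rw [norm_sub_rev]; simpa using this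
  have h3 : ‖h 1 - h x‖ ≤ sb := (nb x 1 hx.1 hx.2).trans (hB2 x hx)
  linarith


lemma finite_case (n p : ℝ) (hpn : p ≤ n) (hp : 0 ≤ p) (hn : 1 ≤ n)
    (h : ℝ → ℂ) (hc : ContDiffOn ℝ 1 h (Set.Ioi 0))
    (h' : ℝ → ℂ) (hh' : h' = derivWithin h (Set.Ioi 0))
    (A B : ENNReal)
    (hA : A = ∫⁻ x in Set.Ioi (0:ℝ), ENNReal.ofReal (x ^ (2*n) * ‖h x‖^2))
    (hB : B = ∫⁻ x in Set.Ioi (0:ℝ), ENNReal.ofReal (‖h' x‖^2))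
    (hAtop : A ≠ ⊤) (hBtop : B ≠ ⊤) :
    (∫⁻ x in Set.Ioi (0:ℝ), ENNReal.ofReal (x ^ (2*p) * ‖h x‖^2)) ^ (1/2 : ℝ)
      ≤ ENNReal.ofReal 2 * (A ^ (1/2 : ℝ) + B ^ (1/2 : ℝ)) := by
  have h2 : (0:ℝ) < 1/2 := by norm_num
  set a := A.toReal with ha
  set b := B.toReal with hb
  have ha0 : 0 ≤ a := ENNReal.toReal_nonneg
  have hb0 : 0 ≤ b := ENNReal.toReal_nonneg
  have hAa : A = ENNReal.ofReal a := (ENNReal.ofReal_toReal hAtop).symm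
  have hBb : B = ENNReal.ofReal b := (ENNReal.ofReal_toReal hBtop).symm
  have hcont : ContinuousOn h (Ioi 0) := hc.continuousOn
  have h'cont : ContinuousOn h' (Ioi 0) := by
    rw [hh']; exact hc.continuousOn_derivWithin isOpen_Ioi.uniqueDiffOn le_rfl
  -- integrability of squares
  have hint2 : ∀ u v : ℝ, 0 < u → IntegrableOn (fun y => ‖h y‖^2) (Ioc u v) := by
    intro u v hu
    have hsub : Icc u v ⊆ Ioi 0 := fun t ht => lt_of_lt_of_le hu ht.1
    exact (((hcont.mono hsub).norm.pow 2).integrableOn_compact isCompact_Icc).mono_set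
      Ioc_subset_Icc_self
  have h'int2 : ∀ u v : ℝ, 0 < u → IntegrableOn (fun y => ‖h' y‖^2) (Ioc u v) := by
    intro u v hu
    have hsub : Icc u v ⊆ Ioi 0 := fun t ht => lt_of_lt_of_le hu ht.1
    exact (((h'cont.mono hsub).norm.pow 2).integrableOn_compact isCompact_Icc).mono_set
      Ioc_subset_Icc_self
  have hint1 : ∀ u v : ℝ, 0 < u → IntegrableOn (fun y => ‖h y‖) (Ioc u v) := by
    intro u v hu
    have hsub : Icc u v ⊆ Ioi 0 := fun t ht => lt_of_lt_of_le hu ht.1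
    exact (((hcont.mono hsub).norm).integrableOn_compact isCompact_Icc).mono_set
      Ioc_subset_Icc_self
  have h'int1 : ∀ u v : ℝ, 0 < u → IntegrableOn (fun y => ‖h' y‖) (Ioc u v) := by
    intro u v hu
    have hsub : Icc u v ⊆ Ioi 0 := fun t ht => lt_of_lt_of_le hu ht.1
    exact (((h'cont.mono hsub).norm).integrableOn_compact isCompact_Icc).mono_set
      Ioc_subset_Icc_self
  -- real integral bounds from lintegral bounds
  have hA' : ∫ y in Ioc (1:ℝ) 2, ‖h y‖^2 ≤ a := by
    rw [← ENNReal.ofReal_le_ofReal_iff ha0,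
      ofReal_integral_eq_lintegral_ofReal (hint2 1 2 one_pos)
        (Filter.Eventually.of_forall fun y => by positivity), ← hAa, hA]
    calc ∫⁻ y in Ioc (1:ℝ) 2, ENNReal.ofReal (‖h y‖^2)
        ≤ ∫⁻ y in Ioc (1:ℝ) 2, ENNReal.ofReal (y ^ (2*n) * ‖h y‖^2) := by
          refine setLIntegral_mono' measurableSet_Ioc fun y hy => ?_
          refine ENNReal.ofReal_le_ofReal ?_
          exact le_mul_of_one_le_left (by positivity)
            (Real.one_le_rpow hy.1.le (by linarith))
      _ ≤ ∫⁻ y in Ioi (0:ℝ), ENNReal.ofReal (y ^ (2*n) * ‖h y‖^2) :=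
          lintegral_mono_set (fun y hy => lt_trans one_pos hy.1)
  have hB' : ∀ u v : ℝ, 0 < u → v ≤ u + 1 → ∫ y in Ioc u v, ‖h' y‖^2 ≤ b := by
    intro u v hu _
    rw [← ENNReal.ofReal_le_ofReal_iff hb0,
      ofReal_integral_eq_lintegral_ofReal (h'int2 u v hu)
        (Filter.Eventually.of_forall fun y => by positivity), ← hBb, hB]
    exact lintegral_mono_set (fun y hy => lt_trans hu hy.1)
  -- Cauchy–Schwarz consequences
  have volIoc : ∀ u v : ℝ, v ≤ u + 1 → volume (Ioc u v) ≤ 1 := by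
    intro u v huv
    rw [Real.volume_Ioc]
    calc ENNReal.ofReal (v - u) ≤ ENNReal.ofReal 1 := ENNReal.ofReal_le_ofReal (by linarith)
      _ = 1 := ENNReal.ofReal_one
  have csA : ∫ y in Ioc (1:ℝ) 2, ‖h y‖ ≤ Real.sqrt a :=
    cs_aux measurableSet_Ioc (volIoc 1 2 (by norm_num)) (hint1 1 2 one_pos)
      (hint2 1 2 one_pos) ha0 hA'
  have csB1 : ∫ y in Ioc (1:ℝ) 2, ‖h' y‖ ≤ Real.sqrt b :=
    cs_aux measurableSet_Ioc (volIoc 1 2 (by norm_num)) (h'int1 1 2 one_pos)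
      (h'int2 1 2 one_pos) hb0 (hB' 1 2 one_pos (by norm_num))
  have csB2 : ∀ x ∈ Ioc (0:ℝ) 1, ∫ y in Ioc x 1, ‖h' y‖ ≤ Real.sqrt b := by
    intro x hx
    exact cs_aux measurableSet_Ioc (volIoc x 1 (by linarith [hx.1])) (h'int1 x 1 hx.1)
      (h'int2 x 1 hx.1) hb0 (hB' x 1 hx.1 (by linarith [hx.1]))
  -- pointwise bound
  set M := Real.sqrt a + 2 * Real.sqrt b with hM
  have hM0 : 0 ≤ M := by positivity
  have hptw : ∀ x ∈ Ioc (0:ℝ) 1, ‖h x‖ ≤ M := by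
    rw [hM]
    exact pointwise_bound hc (Real.sqrt_nonneg a) (Real.sqrt_nonneg b) csA
      (by rw [hh'] at csB1; exact csB1) (by rw [hh'] at csB2; exact csB2)
  -- main estimate
  set F := fun x : ℝ => ENNReal.ofReal (x ^ (2*p) * ‖h x‖^2) with hF
  have split : ∫⁻ x in Ioi (0:ℝ), F x = (∫⁻ x in Ioc (0:ℝ) 1, F x) + ∫⁻ x in Ioi (1:ℝ), F x := by
    rw [← lintegral_union measurableSet_Ioi (Ioc_disjoint_Ioi le_rfl),
      Ioc_union_Ioi_eq_Ioi zero_le_one]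
  have est1 : ∫⁻ x in Ioc (0:ℝ) 1, F x ≤ ENNReal.ofReal (M^2) := by
    calc ∫⁻ x in Ioc (0:ℝ) 1, F x ≤ ∫⁻ _ in Ioc (0:ℝ) 1, ENNReal.ofReal (M^2) := by
          refine setLIntegral_mono' measurableSet_Ioc fun x hx => ?_
          refine ENNReal.ofReal_le_ofReal ?_
          have h1 : x ^ (2*p) ≤ 1 := Real.rpow_le_one hx.1.le hx.2 (by linarith)
          have h2 : ‖h x‖^2 ≤ M^2 := pow_le_pow_left₀ (norm_nonneg _) (hptw x hx) 2
          calc x ^ (2*p) * ‖h x‖^2 ≤ 1 * ‖h x‖^2 :=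
                mul_le_mul_of_nonneg_right h1 (by positivity)
            _ = ‖h x‖^2 := one_mul _
            _ ≤ M^2 := h2
      _ = ENNReal.ofReal (M^2) := by
          rw [setLIntegral_const, Real.volume_Ioc]
          norm_num
  have est2 : ∫⁻ x in Ioi (1:ℝ), F x ≤ A := by
    rw [hA]
    calc ∫⁻ x in Ioi (1:ℝ), F x
        ≤ ∫⁻ x in Ioi (1:ℝ), ENNReal.ofReal (x ^ (2*n) * ‖h x‖^2) := by
          refine setLIntegral_mono' measurableSet_Ioi fun x hx => ?_
          refine ENNReal.ofReal_le_ofReal ?_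
          exact mul_le_mul_of_nonneg_right
            (Real.rpow_le_rpow_of_exponent_le hx.le (by linarith)) (by positivity)
      _ ≤ ∫⁻ x in Ioi (0:ℝ), ENNReal.ofReal (x ^ (2*n) * ‖h x‖^2) :=
          lintegral_mono_set (Ioi_subset_Ioi zero_le_one)
  -- assemble
  have hL : ∫⁻ x in Ioi (0:ℝ), F x ≤ ENNReal.ofReal (M^2) + A := by
    rw [split]; exact add_le_add est1 est2
  have step1 : (∫⁻ x in Ioi (0:ℝ), F x) ^ (1/2:ℝ)
      ≤ ENNReal.ofReal (M^2) ^ (1/2:ℝ) + A ^ (1/2:ℝ) :=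
    (ENNReal.rpow_le_rpow hL h2.le).trans
      (ENNReal.rpow_add_le_add_rpow _ _ h2.le (by norm_num))
  have hMhalf : ENNReal.ofReal (M^2) ^ (1/2:ℝ) = ENNReal.ofReal M := by
    rw [ENNReal.ofReal_rpow_of_nonneg (by positivity) h2.le]
    congr 1
    rw [← Real.sqrt_eq_rpow]
    exact Real.sqrt_sq hM0
  have hAhalf : A ^ (1/2:ℝ) = ENNReal.ofReal (Real.sqrt a) := by
    rw [hAa, ENNReal.ofReal_rpow_of_nonneg ha0 h2.le, Real.sqrt_eq_rpow]
  have hBhalf : B ^ (1/2:ℝ) = ENNReal.ofReal (Real.sqrt b) := by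
    rw [hBb, ENNReal.ofReal_rpow_of_nonneg hb0 h2.le, Real.sqrt_eq_rpow]
  have hMof : ENNReal.ofReal M = A ^ (1/2:ℝ) + 2 * B ^ (1/2:ℝ) := by
    rw [hM, ENNReal.ofReal_add (Real.sqrt_nonneg a) (by positivity), hAhalf, hBhalf,
      ENNReal.ofReal_mul (by norm_num)]
    norm_num
  refine step1.trans ?_
  rw [hMhalf, hMof, ENNReal.ofReal_ofNat]
  ring_nf
  exact le_refl _

/-- Lemma 2.4(c): `‖x^p h‖ ≤ C (‖x^n h‖ + ‖h'‖)` on the half line. -/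
theorem weighted_interpolation_inequality
    (n p : ℝ) (hpn : p ≤ n) (hp : 0 ≤ p) (hn : 1 ≤ n) :
    ∃ C : ℝ, 0 < C ∧
      ∀ h : ℝ → ℂ, ContDiffOn ℝ 1 h (Set.Ioi 0) →
        (∃ ρ : ℝ, ∀ x, ρ ≤ x → h x = 0) →
        (∫⁻ x in Set.Ioi (0:ℝ),
            ENNReal.ofReal (x ^ (2*p) * ‖h x‖^2)) ^ (1/2 : ℝ)
          ≤ ENNReal.ofReal C *
            ((∫⁻ x in Set.Ioi (0:ℝ),
                ENNReal.ofReal (x ^ (2*n) * ‖h x‖^2)) ^ (1/2 : ℝ)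
             + (∫⁻ x in Set.Ioi (0:ℝ),
                ENNReal.ofReal (‖derivWithin h (Set.Ioi 0) x‖^2)) ^ (1/2 : ℝ)) := by
  refine ⟨2, two_pos, fun h hc _ => ?_⟩
  set h' := derivWithin h (Set.Ioi 0) with hh'
  set A := ∫⁻ x in Set.Ioi (0:ℝ), ENNReal.ofReal (x ^ (2*n) * ‖h x‖^2) with hA
  set B := ∫⁻ x in Set.Ioi (0:ℝ), ENNReal.ofReal (‖h' x‖^2) with hB
  have h2 : (0:ℝ) < 1/2 := by norm_num
  by_cases hAtop : A = ⊤
  · rw [hAtop, ENNReal.top_rpow_of_pos h2, top_add, ENNReal.mul_top (by simp)]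
    exact le_top
  by_cases hBtop : B = ⊤
  · rw [hBtop, ENNReal.top_rpow_of_pos h2, add_top, ENNReal.mul_top (by simp)]
    exact le_top
  exact finite_case n p hpn hp hn h hc h' hh' A B hA hB hAtop hBtop
end

section
/- Let u : ℝ → ℂ be continuously differentiable with ∫_ℝ |u'(x)|² dx < ∞, and let h ≠ 0. Then ∫_ℝ |∇ₕu(x)|² dx ≤ ∫_ℝ |u'(x)|² dx. -/
open MeasureTheory Set

private lemma dq_pointwise (u : ℝ → ℂ) (hu : ContDiff ℝ 1 u) {h : ℝ} (hh : 0 < h) (x : ℝ) :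
    ENNReal.ofReal (‖(u (x + h) - u (x - h)) / (2 * (h : ℂ))‖^2)
      ≤ (ENNReal.ofReal (2*h))⁻¹ *
        ∫⁻ t in Ioc (x-h) (x+h), ENNReal.ofReal (‖deriv u t‖^2) := by
  have cg : Continuous (deriv u) := hu.continuous_deriv le_rfl
  have hle : x - h ≤ x + h := by linarith
  have ftc : (∫ t in (x-h)..(x+h), deriv u t) = u (x+h) - u (x-h) :=
    intervalIntegral.integral_deriv_eq_sub
      (fun t _ => (hu.differentiable one_ne_zero).differentiableAt)
      (cg.intervalIntegrable _ _)
  have hnum : ‖u (x+h) - u (x-h)‖ ≤ ∫ t in (x-h)..(x+h), ‖deriv u t‖ := by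
    rw [← ftc]; exact intervalIntegral.norm_integral_le_integral_norm hle
  have hA : ENNReal.ofReal (∫ t in (x-h)..(x+h), ‖deriv u t‖)
      = ∫⁻ t in Ioc (x-h) (x+h), ENNReal.ofReal ‖deriv u t‖ := by
    rw [intervalIntegral.integral_of_le hle]
    exact ofReal_integral_eq_lintegral_ofReal
      (cg.norm.integrableOn_Ioc) (Filter.Eventually.of_forall fun t => norm_nonneg _)
  set M := ENNReal.ofReal (2*h) with hM
  set L2 := ∫⁻ t in Ioc (x-h) (x+h), ENNReal.ofReal (‖deriv u t‖^2) with hL2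
  set J := ∫⁻ t in Ioc (x-h) (x+h), ENNReal.ofReal ‖deriv u t‖ with hJdef
  have hM0 : M ≠ 0 := (ENNReal.ofReal_pos.mpr (by linarith)).ne'
  have hMt : M ≠ ⊤ := ENNReal.ofReal_ne_top
  have hμuniv : (volume.restrict (Ioc (x-h) (x+h))) univ = M := by
    rw [Measure.restrict_apply_univ, Real.volume_Ioc]; congr 1; ring
  have hCS : J ≤ L2 ^ (1/2:ℝ) * M ^ (1/2:ℝ) := by
    have hpq : (2:ℝ).HolderConjugate 2 := ⟨by norm_num, by norm_num, by norm_num⟩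
    have hcs := ENNReal.lintegral_mul_le_Lp_mul_Lq (volume.restrict (Ioc (x-h) (x+h))) hpq
      (f := fun t => ENNReal.ofReal ‖deriv u t‖) (g := fun _ => 1)
      (cg.norm.measurable.ennreal_ofReal.aemeasurable) aemeasurable_const
    have h2 : (∫⁻ t in Ioc (x-h) (x+h), (ENNReal.ofReal ‖deriv u t‖) ^ (2:ℝ)) = L2 := by
      refine lintegral_congr fun t => ?_
      rw [show (2:ℝ) = ((2:ℕ):ℝ) by norm_num, ENNReal.rpow_natCast,
        ENNReal.ofReal_pow (norm_nonneg _)]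
    simp only [Pi.mul_apply, Pi.one_apply, mul_one, ENNReal.one_rpow, lintegral_one,
      hμuniv, h2] at hcs
    exact hcs
  have hJ2 : J ^ 2 ≤ L2 * M := by
    calc J ^ 2 = J ^ (2:ℝ) := by rw [← ENNReal.rpow_natCast]; norm_num
    _ ≤ (L2 ^ (1/2:ℝ) * M ^ (1/2:ℝ)) ^ (2:ℝ) := ENNReal.rpow_le_rpow hCS (by norm_num)
    _ = L2 * M := by
        rw [ENNReal.mul_rpow_of_nonneg _ _ (by norm_num), ← ENNReal.rpow_mul,
          ← ENNReal.rpow_mul]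
        norm_num
  have hnorm2h : ‖(2 * (h:ℂ))‖ = 2*h := by
    rw [norm_mul, Complex.norm_real]
    simp [abs_of_pos hh]
  have hDa : ENNReal.ofReal (‖(u (x + h) - u (x - h)) / (2 * (h : ℂ))‖^2)
      = (ENNReal.ofReal ‖u (x+h) - u (x-h)‖)^2 * (M⁻¹)^2 := by
    rw [norm_div, hnorm2h, div_pow, ENNReal.ofReal_div_of_pos (by positivity),
      ENNReal.ofReal_pow (norm_nonneg _), ENNReal.ofReal_pow (by positivity), div_eq_mul_inv,
      ← ENNReal.inv_pow, hM]
  rw [hDa]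
  calc (ENNReal.ofReal ‖u (x+h) - u (x-h)‖)^2 * (M⁻¹)^2
      ≤ J ^ 2 * (M⁻¹)^2 := by
        gcongr
        rw [← hA]; exact ENNReal.ofReal_le_ofReal hnum
    _ ≤ (L2 * M) * (M⁻¹)^2 := by gcongr
    _ = M⁻¹ * L2 := by
        rw [sq, ← mul_assoc, mul_assoc L2, ENNReal.mul_inv_cancel hM0 hMt, mul_one, mul_comm]

private lemma dq_main_pos (u : ℝ → ℂ) (hu : ContDiff ℝ 1 u) {h : ℝ} (hh : 0 < h) :
    ∫⁻ x : ℝ, ENNReal.ofReal (‖(u (x + h) - u (x - h)) / (2 * (h : ℂ))‖^2)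
      ≤ ∫⁻ x : ℝ, ENNReal.ofReal (‖deriv u x‖^2) := by
  have cg : Continuous (deriv u) := hu.continuous_deriv le_rfl
  have cF : Continuous (fun t => ENNReal.ofReal (‖deriv u t‖^2)) :=
    ENNReal.continuous_ofReal.comp (cg.norm.pow 2)
  set M := ENNReal.ofReal (2*h) with hM
  set I := ∫⁻ x : ℝ, ENNReal.ofReal (‖deriv u x‖^2) with hI
  have hM0 : M ≠ 0 := (ENNReal.ofReal_pos.mpr (by linarith)).ne'
  have hMt : M ≠ ⊤ := ENNReal.ofReal_ne_top
  have hpt : ∀ x : ℝ, ENNReal.ofReal (‖(u (x + h) - u (x - h)) / (2 * (h : ℂ))‖^2)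
      ≤ M⁻¹ * ∫⁻ s in Ioc (-h) h, ENNReal.ofReal (‖deriv u (x + s)‖^2) := by
    intro x
    refine (dq_pointwise u hu hh x).trans_eq ?_
    congr 1
    have key := (measurePreserving_add_left volume x).setLIntegral_comp_emb
      (measurableEmbedding_addLeft x) (fun t => ENNReal.ofReal (‖deriv u t‖^2)) (Ioc (-h) h)
    rw [image_const_add_Ioc, show x + -h = x - h by ring] at key
    exact key.symm
  calc ∫⁻ x : ℝ, ENNReal.ofReal (‖(u (x + h) - u (x - h)) / (2 * (h : ℂ))‖^2)
      ≤ ∫⁻ x : ℝ, M⁻¹ * ∫⁻ s in Ioc (-h) h, ENNReal.ofReal (‖deriv u (x + s)‖^2) :=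
        lintegral_mono hpt
    _ = M⁻¹ * ∫⁻ x : ℝ, ∫⁻ s in Ioc (-h) h, ENNReal.ofReal (‖deriv u (x + s)‖^2) :=
        lintegral_const_mul' _ _ (ENNReal.inv_ne_top.mpr hM0)
    _ = M⁻¹ * ∫⁻ s in Ioc (-h) h, ∫⁻ x : ℝ, ENNReal.ofReal (‖deriv u (x + s)‖^2) := by
        rw [lintegral_lintegral_swap]
        exact ((cF.measurable).comp measurable_add).aemeasurable
    _ = M⁻¹ * ∫⁻ _ in Ioc (-h) h, I := by
        congr 1
        exact lintegral_congr fun s =>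
          lintegral_add_right_eq_self (fun t => ENNReal.ofReal (‖deriv u t‖^2)) s
    _ = M⁻¹ * (I * M) := by
        rw [lintegral_const, Measure.restrict_apply_univ, Real.volume_Ioc,
          show h - -h = 2*h by ring]
    _ = I := by
        rw [mul_comm I M, ← mul_assoc, ENNReal.inv_mul_cancel hM0 hMt, one_mul]

/-- Lemma 4.1 (norm bound): `‖∇ₕ u‖_{L²} ≤ ‖u'‖_{L²}`. -/
theorem difference_quotient_L2_bound
    (u : ℝ → ℂ) (hu : ContDiff ℝ 1 u)
    (hfin : (∫⁻ x : ℝ, ENNReal.ofReal (‖deriv u x‖^2)) < ⊤)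
    (h : ℝ) (hh : h ≠ 0) :
    ∫⁻ x : ℝ, ENNReal.ofReal (‖(u (x + h) - u (x - h)) / (2 * (h : ℂ))‖^2)
      ≤ ∫⁻ x : ℝ, ENNReal.ofReal (‖deriv u x‖^2) := by
  rcases hh.lt_or_gt with hneg | hpos
  · have hpos' : 0 < -h := by linarith
    have key := dq_main_pos u hu hpos'
    refine le_trans (le_of_eq ?_) key
    refine lintegral_congr fun x => ?_
    congr 2
    push_cast
    rw [show x + -h = x - h by ring, show x - -h = x + h by ring]
    rw [show (2 : ℂ) * -(h:ℂ) = -(2 * h) by ring, div_neg, ← neg_div, neg_sub]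
  · exact dq_main_pos u hu hpos
end

section
/- Let u : ℝ → ℂ be continuously differentiable with ∫_ℝ |u'(x)|² dx < ∞. Then ∇ₕu converges to u' strongly in L²(ℝ) as h → 0, i.e. lim_{h→0, h≠0} ∫_ℝ |∇ₕu(x) − u'(x)|² dx = 0. -/
open MeasureTheory Set Filter

lemma enn_sq_aux_dq {E : Type*} [NormedAddCommGroup E] (v : E) :
    ENNReal.ofReal (‖v‖^2) = ((‖v‖₊ : ENNReal))^(2:ℝ) := by
  rw [ENNReal.ofReal_pow (norm_nonneg v), ofReal_norm,
    ← ENNReal.rpow_natCast]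
  norm_num
  rfl

lemma aux_pointwise_dq (g : ℝ → ℂ) (hgc : Continuous g) (u : ℝ → ℂ)
    (hder : ∀ x, HasDerivAt u (g x) x) {h : ℝ} (hh : 0 < h) (x : ℝ) :
    ENNReal.ofReal (‖(u (x + h) - u (x - h)) / (2 * (h:ℂ)) - g x‖^2)
      ≤ (ENNReal.ofReal (2*h))⁻¹ *
        ∫⁻ t in Ioc (x - h) (x + h), ((‖g t - g x‖₊ : ENNReal))^(2:ℝ) := by
  have hle : x - h ≤ x + h := by linarith
  have hint : IntervalIntegrable g MeasureTheory.volume (x - h) (x + h) :=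
    hgc.intervalIntegrable _ _
  have key : ∫ t in (x - h)..(x + h), g t = u (x + h) - u (x - h) :=
    intervalIntegral.integral_eq_sub_of_hasDerivAt (fun t _ => hder t) hint
  have hA : ∫ t in (x - h)..(x + h), (g t - g x) =
      (u (x + h) - u (x - h)) - (2 * h : ℝ) • g x := by
    rw [intervalIntegral.integral_sub hint (intervalIntegrable_const), key,
      intervalIntegral.integral_const]
    ring_nf
  set A : ℂ := ∫ t in (x - h)..(x + h), (g t - g x) with hAdef
  have h2h : (2 * (h:ℂ)) ≠ 0 := by
    simp [Complex.ofReal_ne_zero, hh.ne']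
  have heq : (u (x + h) - u (x - h)) / (2 * (h:ℂ)) - g x = A / (2 * (h:ℂ)) := by
    rw [hA, Complex.real_smul]
    push_cast
    rw [sub_div _ (2 * (h:ℂ) * g x), mul_div_cancel_left₀ _ h2h]
  have hnorm : ‖(u (x + h) - u (x - h)) / (2 * (h:ℂ)) - g x‖ = ‖A‖ / (2*h) := by
    rw [heq, norm_div]
    congr 1
    simp [abs_of_pos hh]
  have hintOn : IntegrableOn (fun t => g t - g x) (Ioc (x-h) (x+h)) MeasureTheory.volume :=
    (hgc.sub continuous_const).integrableOn_Ioc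
  have hNle : ENNReal.ofReal ‖A‖ ≤ ∫⁻ t in Ioc (x - h) (x + h), (‖g t - g x‖₊ : ENNReal) := by
    calc ENNReal.ofReal ‖A‖
        ≤ ENNReal.ofReal (∫ t in Ioc (x - h) (x + h), ‖g t - g x‖) := by
          apply ENNReal.ofReal_le_ofReal
          rw [hAdef, intervalIntegral.integral_of_le hle]
          exact norm_integral_le_integral_norm _
      _ = _ := ofReal_integral_norm_eq_lintegral_enorm hintOn
  set B : ENNReal := ∫⁻ t in Ioc (x - h) (x + h), ((‖g t - g x‖₊ : ENNReal))^(2:ℝ) with hBdef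
  set C : ENNReal := ENNReal.ofReal (2*h) with hCdef
  have hC0 : C ≠ 0 := by simp [hCdef]; positivity
  have hCtop : C ≠ ⊤ := ENNReal.ofReal_ne_top
  have hCS : (∫⁻ t in Ioc (x - h) (x + h), (‖g t - g x‖₊ : ENNReal))
      ≤ B^(1/2 : ℝ) * C^(1/2 : ℝ) := by
    have hpq : Real.HolderConjugate 2 2 := Real.HolderConjugate.two_two
    have hmeas : AEMeasurable (fun t => ((‖g t - g x‖₊ : ENNReal)))
        (MeasureTheory.volume.restrict (Ioc (x-h) (x+h))) :=
      (ENNReal.continuous_coe.comp (hgc.sub continuous_const).nnnorm).measurable.aemeasurable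
    have hv : MeasureTheory.volume (Ioc (x-h) (x+h)) = C := by
      rw [hCdef, Real.volume_Ioc]; congr 1; ring
    have := ENNReal.lintegral_mul_le_Lp_mul_Lq
      (MeasureTheory.volume.restrict (Ioc (x-h) (x+h))) hpq hmeas aemeasurable_const
      (g := fun _ => (1:ENNReal))
    simp only [Pi.mul_apply, mul_one, ENNReal.one_rpow, lintegral_const,
      Measure.restrict_apply_univ, one_mul, hv] at this
    exact this
  have hsq : (ENNReal.ofReal ‖A‖)^2 ≤ B * C := by
    calc (ENNReal.ofReal ‖A‖)^2 ≤ (B^(1/2:ℝ) * C^(1/2:ℝ))^2 :=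
          pow_le_pow_left' (hNle.trans hCS) 2
      _ = B * C := by
          rw [mul_pow, ← ENNReal.rpow_natCast (B^(1/2:ℝ)), ← ENNReal.rpow_natCast (C^(1/2:ℝ)),
            ← ENNReal.rpow_mul, ← ENNReal.rpow_mul]
          norm_num
  have hN2 : (ENNReal.ofReal ‖A‖ * C⁻¹)^2 ≤ C⁻¹ * B := by
    calc (ENNReal.ofReal ‖A‖ * C⁻¹)^2 = (ENNReal.ofReal ‖A‖)^2 * (C⁻¹ * C⁻¹) := by ring
      _ ≤ (B * C) * (C⁻¹ * C⁻¹) := by gcongr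
      _ = B * (C * C⁻¹) * C⁻¹ := by ring
      _ = C⁻¹ * B := by rw [ENNReal.mul_inv_cancel hC0 hCtop, mul_one, mul_comm]
  have hdiv : ENNReal.ofReal (‖A‖ / (2*h)) = ENNReal.ofReal ‖A‖ * C⁻¹ := by
    rw [hCdef, ENNReal.ofReal_div_of_pos (by positivity), div_eq_mul_inv]
  calc ENNReal.ofReal (‖(u (x + h) - u (x - h)) / (2 * (h:ℂ)) - g x‖^2)
      = (ENNReal.ofReal (‖A‖ / (2*h)))^2 := by
        rw [hnorm, ENNReal.ofReal_pow (by positivity)]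
    _ = (ENNReal.ofReal ‖A‖ * C⁻¹)^2 := by rw [hdiv]
    _ ≤ C⁻¹ * B := hN2

lemma aux_translation_dq (g : ℝ → ℂ) (hg2 : MemLp g 2 MeasureTheory.volume) :
    Tendsto (fun s : ℝ => ∫⁻ x : ℝ, ((‖g (x + s) - g x‖₊ : ENNReal))^(2:ℝ))
      (nhds 0) (nhds 0) := by
  haveI : Fact ((1:ENNReal) ≤ 2) := ⟨one_le_two⟩
  set G : Lp ℂ 2 (MeasureTheory.volume : Measure ℝ) := hg2.toLp g with hGdef
  set cmap : ℝ → C(ℝ, ℝ) := fun s => ⟨fun x => x + s, by continuity⟩ with hcmapdef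
  have hcmap : Continuous cmap := by
    apply ContinuousMap.continuous_of_continuous_uncurry
    exact continuous_snd.add continuous_fst
  have hmp : ∀ s : ℝ, MeasurePreserving (cmap s) MeasureTheory.volume MeasureTheory.volume :=
    fun s => measurePreserving_add_right MeasureTheory.volume s
  set T : ℝ → Lp ℂ 2 (MeasureTheory.volume : Measure ℝ) :=
    fun s => Lp.compMeasurePreserving (cmap s) (hmp s) G with hTdef
  have hTcont : Continuous T :=
    Continuous.compMeasurePreservingLp continuous_const hcmap hmp (by norm_num)
  have hT0 : T 0 = G := by
    apply Lp.ext
    refine (Lp.coeFn_compMeasurePreserving G (hmp 0)).trans ?_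
    filter_upwards with x
    simp [hcmapdef]
  have hkey : ∀ s : ℝ, (∫⁻ x : ℝ, ((‖g (x + s) - g x‖₊ : ENNReal))^(2:ℝ))
      = ENNReal.ofReal (‖T s - G‖^2) := by
    intro s
    have hae : (↑(T s - G) : ℝ → ℂ) =ᵐ[MeasureTheory.volume]
        fun x => g (x + s) - g x := by
      have h1 : (↑(T s) : ℝ → ℂ) =ᵐ[MeasureTheory.volume] (↑G : ℝ → ℂ) ∘ (cmap s) :=
        Lp.coeFn_compMeasurePreserving G (hmp s)
      have h2 : ((↑G : ℝ → ℂ) ∘ (cmap s)) =ᵐ[MeasureTheory.volume] (g ∘ (cmap s)) :=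
        (hmp s).quasiMeasurePreserving.ae_eq (hg2.coeFn_toLp)
      have h3 : (↑G : ℝ → ℂ) =ᵐ[MeasureTheory.volume] g := hg2.coeFn_toLp
      filter_upwards [Lp.coeFn_sub (T s) G, h1, h2, h3] with x e1 e2 e3 e4
      simp only [e1, Pi.sub_apply, e2, e3, e4]
      rfl
    have hnorm : (‖T s - G‖₊ : ENNReal) = eLpNorm (fun x => g (x + s) - g x) 2
        MeasureTheory.volume := by
      rw [← eLpNorm_congr_ae hae]
      exact (Lp.nnnorm_def (T s - G)) ▸ ENNReal.coe_toNNReal (Lp.eLpNorm_ne_top _)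
    calc (∫⁻ x : ℝ, ((‖g (x + s) - g x‖₊ : ENNReal))^(2:ℝ))
        = (eLpNorm (fun x => g (x + s) - g x) 2 MeasureTheory.volume)^(2:ℝ) := by
          rw [eLpNorm_eq_lintegral_rpow_enorm_toReal (by norm_num) (by norm_num),
            ← ENNReal.rpow_mul]
          norm_num
          rfl
      _ = (‖T s - G‖₊ : ENNReal)^(2:ℝ) := by rw [hnorm]
      _ = ENNReal.ofReal (‖T s - G‖^2) := (enn_sq_aux_dq _).symm
  simp only [hkey]
  have : Tendsto (fun s => ‖T s - G‖^2) (nhds 0) (nhds 0) := by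
    have h1 : Tendsto (fun s => T s - G) (nhds 0) (nhds (0 : Lp ℂ 2 _)) := by
      have h0 : Continuous (fun s => T s - G) := hTcont.sub continuous_const
      have := h0.tendsto 0
      rwa [hT0, sub_self] at this
    have h2 := (h1.norm).pow 2
    simpa using h2
  have := (ENNReal.continuous_ofReal.tendsto 0).comp this
  simpa [Function.comp_def] using this

lemma aux_bound_dq (g : ℝ → ℂ) (hgc : Continuous g) (u : ℝ → ℂ)
    (hder : ∀ x, HasDerivAt u (g x) x) {h : ℝ} (hh : 0 < h) :
    (∫⁻ x : ℝ, ENNReal.ofReal (‖(u (x + h) - u (x - h)) / (2 * (h:ℂ)) - deriv u x‖^2))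
      ≤ (ENNReal.ofReal (2*h))⁻¹ *
        ∫⁻ s in Ioc (-h) h, ∫⁻ x : ℝ, ((‖g (x + s) - g x‖₊ : ENNReal))^(2:ℝ) := by
  have hderiv : deriv u = g := funext fun x => (hder x).deriv
  have hKc : Continuous (fun p : ℝ × ℝ => ((‖g (p.1 + p.2) - g p.1‖₊ : ENNReal))^(2:ℝ)) :=
    (ENNReal.continuous_rpow_const).comp
      (ENNReal.continuous_coe.comp
        (((hgc.comp (continuous_fst.add continuous_snd)).sub (hgc.comp continuous_fst)).nnnorm))
  have hCtop' : (ENNReal.ofReal (2*h))⁻¹ ≠ ⊤ := by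
    simp only [ne_eq, ENNReal.inv_eq_top]
    positivity
  calc (∫⁻ x : ℝ, ENNReal.ofReal (‖(u (x + h) - u (x - h)) / (2 * (h:ℂ)) - deriv u x‖^2))
      ≤ ∫⁻ x : ℝ, (ENNReal.ofReal (2*h))⁻¹ *
          ∫⁻ t in Ioc (x - h) (x + h), ((‖g t - g x‖₊ : ENNReal))^(2:ℝ) := by
        rw [hderiv]
        exact lintegral_mono fun x => aux_pointwise_dq g hgc u hder hh x
    _ = (ENNReal.ofReal (2*h))⁻¹ * ∫⁻ x : ℝ,
          ∫⁻ t in Ioc (x - h) (x + h), ((‖g t - g x‖₊ : ENNReal))^(2:ℝ) :=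
        lintegral_const_mul' _ _ hCtop'
    _ = (ENNReal.ofReal (2*h))⁻¹ * ∫⁻ x : ℝ,
          ∫⁻ s in Ioc (-h) h, ((‖g (x + s) - g x‖₊ : ENNReal))^(2:ℝ) := by
        congr 1
        apply lintegral_congr
        intro x
        have hfm : Measurable (fun t : ℝ => ((‖g t - g x‖₊ : ENNReal))^(2:ℝ)) :=
          ((ENNReal.continuous_rpow_const).comp
            (ENNReal.continuous_coe.comp (hgc.sub continuous_const).nnnorm)).measurable
        have hpre : (fun a : ℝ => a + x) ⁻¹' (Ioc (x - h) (x + h)) = Ioc (-h) h := by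
          ext a
          simp only [mem_preimage, mem_Ioc]
          constructor <;> (rintro ⟨h1, h2⟩; exact ⟨by linarith, by linarith⟩)
        have := (measurePreserving_add_right MeasureTheory.volume x).setLIntegral_comp_preimage
          (measurableSet_Ioc (a := x - h) (b := x + h)) hfm
        rw [hpre] at this
        rw [← this]
        apply lintegral_congr
        intro a
        rw [add_comm a x]
    _ = (ENNReal.ofReal (2*h))⁻¹ *
          ∫⁻ s in Ioc (-h) h, ∫⁻ x : ℝ, ((‖g (x + s) - g x‖₊ : ENNReal))^(2:ℝ) := by
        congr 1
        exact lintegral_lintegral_swap hKc.measurable.aemeasurable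

/-- Lemma 4.1 (convergence): `∇ₕ u → u'` strongly in `L²(ℝ)` as `h → 0`. -/
theorem difference_quotient_L2_convergence
    (u : ℝ → ℂ) (hu : ContDiff ℝ 1 u)
    (hfin : (∫⁻ x : ℝ, ENNReal.ofReal (‖deriv u x‖^2)) < ⊤) :
    Filter.Tendsto
      (fun h : ℝ => ∫⁻ x : ℝ,
        ENNReal.ofReal (‖(u (x + h) - u (x - h)) / (2 * (h : ℂ)) - deriv u x‖^2))
      (nhdsWithin 0 {(0:ℝ)}ᶜ) (nhds (0 : ENNReal)) := by
  have hgc : Continuous (deriv u) := hu.continuous_deriv le_rfl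
  have hder : ∀ x, HasDerivAt u (deriv u x) x :=
    fun x => (hu.differentiable one_ne_zero x).hasDerivAt
  have hg2 : MemLp (deriv u) 2 MeasureTheory.volume := by
    constructor
    · exact hgc.aestronglyMeasurable
    · rw [eLpNorm_eq_lintegral_rpow_enorm_toReal (by norm_num) (by norm_num)]
      have hlt : (∫⁻ x : ℝ, ((‖deriv u x‖₊ : ENNReal))^((2:ENNReal).toReal)) < ⊤ := by
        simp only [ENNReal.toReal_ofNat]
        simpa only [enn_sq_aux_dq] using hfin
      exact ENNReal.rpow_lt_top_of_nonneg (by norm_num) hlt.ne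
  have hFpos : Filter.Tendsto
      (fun h : ℝ => ∫⁻ x : ℝ,
        ENNReal.ofReal (‖(u (x + h) - u (x - h)) / (2 * (h : ℂ)) - deriv u x‖^2))
      (nhdsWithin 0 (Ioi 0)) (nhds (0 : ENNReal)) := by
    rw [ENNReal.tendsto_nhds_zero]
    intro ε hε
    set r : ENNReal := min ε 1 with hrdef
    have hr0 : 0 < r := lt_min hε one_pos
    have hrε : r ≤ ε := min_le_left _ _
    have hev : ∀ᶠ s in nhds (0:ℝ),
        (∫⁻ x : ℝ, ((‖deriv u (x + s) - deriv u x‖₊ : ENNReal))^(2:ℝ)) ≤ r :=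
      (ENNReal.tendsto_nhds_zero.mp (aux_translation_dq (deriv u) hg2)) r hr0
    obtain ⟨δ, hδ, hδ'⟩ := Metric.eventually_nhds_iff.mp hev
    filter_upwards [Ioo_mem_nhdsGT_of_mem (show (0:ℝ) ∈ Ico 0 δ from ⟨le_refl _, hδ⟩)]
      with h hh
    obtain ⟨hh0, hhδ⟩ := hh
    set C : ENNReal := ENNReal.ofReal (2*h) with hCdef
    have hC0 : C ≠ 0 := by simp [hCdef]; positivity
    have hCtop : C ≠ ⊤ := ENNReal.ofReal_ne_top
    calc (∫⁻ x : ℝ,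
          ENNReal.ofReal (‖(u (x + h) - u (x - h)) / (2 * (h : ℂ)) - deriv u x‖^2))
        ≤ C⁻¹ * ∫⁻ s in Ioc (-h) h,
            ∫⁻ x : ℝ, ((‖deriv u (x + s) - deriv u x‖₊ : ENNReal))^(2:ℝ) :=
          aux_bound_dq (deriv u) hgc u hder hh0
      _ ≤ C⁻¹ * ∫⁻ _ in Ioc (-h) h, r := by
          refine mul_le_mul_right ?_ _
          refine setLIntegral_mono' measurableSet_Ioc fun s hs => ?_
          apply hδ'
          rw [Real.dist_eq, sub_zero]
          exact abs_lt.mpr ⟨by linarith [hs.1], by linarith [hs.2]⟩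
      _ = C⁻¹ * (r * C) := by
          rw [setLIntegral_const, Real.volume_Ioc, hCdef]
          congr 2
          ring
      _ = r * (C⁻¹ * C) := by ring
      _ = r := by rw [ENNReal.inv_mul_cancel hC0 hCtop, mul_one]
      _ ≤ ε := hrε
  have hFeven : ∀ h : ℝ,
      (∫⁻ x : ℝ,
        ENNReal.ofReal (‖(u (x + -h) - u (x - -h)) / (2 * ((-h : ℝ) : ℂ)) - deriv u x‖^2))
      = ∫⁻ x : ℝ,
        ENNReal.ofReal (‖(u (x + h) - u (x - h)) / (2 * (h : ℂ)) - deriv u x‖^2) := by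
    intro h
    apply lintegral_congr
    intro x
    have e1 : x + -h = x - h := by ring
    have e2 : x - -h = x + h := by ring
    have e3 : (2 * ((-h : ℝ) : ℂ)) = -(2 * (h : ℂ)) := by push_cast; ring
    rw [e1, e2, e3, div_neg, ← neg_div, neg_sub]
  have hFneg : Filter.Tendsto
      (fun h : ℝ => ∫⁻ x : ℝ,
        ENNReal.ofReal (‖(u (x + h) - u (x - h)) / (2 * (h : ℂ)) - deriv u x‖^2))
      (nhdsWithin 0 (Iio 0)) (nhds (0 : ENNReal)) := by
    have hneg := tendsto_neg_nhdsLT (a := (0:ℝ))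
    rw [neg_zero] at hneg
    have hcomp := hFpos.comp hneg
    refine hcomp.congr fun h => ?_
    exact hFeven h
  rw [← nhdsLT_sup_nhdsGT (0:ℝ), Filter.tendsto_sup]
  exact ⟨hFneg, hFpos⟩
end

section
/- Let κ ∈ (0,1), let d and d₁ be positive integers, let a be a real symmetric d×d matrix and σ a real d×d₁ matrix such that for all x ∈ ℝ^d: κ‖x‖² + ‖σᵀx‖² ≤ 2⟨ax, x⟩ and ‖σᵀx‖² ≤ κ^{-1}‖x‖². Then there exists μ > 0 depending only on κ such that for all w ∈ ℂ^d and z ∈ ℂ^{d₁}: 2 ∑_{j,l} a_{jl} \overline{w_j} w_l + ‖z‖² − 2 Re ∑_{j,k} σ_{jk} \overline{w_j} z_k ≥ μ κ² (‖w‖² + ‖z‖²). -/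
open Finset

lemma real_coercive (κ : ℝ) (hκ0 : 0 < κ) (hκ1 : κ < 1)
    {d d₁ : ℕ} (a : Matrix (Fin d) (Fin d) ℝ) (σ : Matrix (Fin d) (Fin d₁) ℝ)
    (h1 : ∀ x : Fin d → ℝ,
      κ * (∑ j, (x j)^2) + (∑ k, (∑ j, σ j k * x j)^2)
        ≤ 2 * ∑ j, ∑ l, a j l * x j * x l)
    (h2 : ∀ x : Fin d → ℝ,
      (∑ k, (∑ j, σ j k * x j)^2) ≤ κ⁻¹ * ∑ j, (x j)^2)
    (x : Fin d → ℝ) (y : Fin d₁ → ℝ) :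
    κ^2/4 * ((∑ j, (x j)^2) + ∑ k, (y k)^2)
      ≤ 2 * (∑ j, ∑ l, a j l * x j * x l) + (∑ k, (y k)^2)
        - 2 * ∑ j, ∑ k, σ j k * x j * y k := by
  set s : Fin d₁ → ℝ := fun k => ∑ j, σ j k * x j with hs
  have hC : ∑ j, ∑ k, σ j k * x j * y k = ∑ k, s k * y k := by
    rw [Finset.sum_comm]
    exact Finset.sum_congr rfl fun k _ => by simp [hs, Finset.sum_mul]
  set A := ∑ j, (x j)^2 with hA'
  set B := ∑ k, (y k)^2 with hB'
  set S := ∑ k, (s k)^2 with hS'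
  set C := ∑ k, s k * y k with hC'
  set D := ∑ k, (y k - s k)^2 with hD'
  have hA : 0 ≤ A := Finset.sum_nonneg fun _ _ => sq_nonneg _
  have hB : 0 ≤ B := Finset.sum_nonneg fun _ _ => sq_nonneg _
  have hD0 : 0 ≤ D := Finset.sum_nonneg fun _ _ => sq_nonneg _
  have hDeq : D = B - 2*C + S := by
    rw [hD', hB', hC', hS', Finset.mul_sum, ← Finset.sum_sub_distrib, ← Finset.sum_add_distrib]
    exact Finset.sum_congr rfl fun k _ => by ring
  have hDB : B/2 - S ≤ D := by
    have : B/2 - S = ∑ k, ((y k)^2/2 - (s k)^2) := by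
      rw [Finset.sum_sub_distrib, hB', hS', ← Finset.sum_div]
    rw [this]
    exact Finset.sum_le_sum fun k _ => by nlinarith [sq_nonneg (y k - 2 * s k)]
  have H1 := h1 x
  have H2 : κ * S ≤ A := by
    have := h2 x
    have h := mul_le_mul_of_nonneg_left this hκ0.le
    rwa [← mul_assoc, mul_inv_cancel₀ hκ0.ne', one_mul] at h
  rw [hC]
  nlinarith [mul_nonneg (by positivity : (0:ℝ) ≤ κ^2/2) (by linarith : (0:ℝ) ≤ D - (B/2 - S)),
    mul_nonneg (by nlinarith : (0:ℝ) ≤ 1 - κ^2/2) hD0,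
    mul_nonneg hκ0.le (by linarith : (0:ℝ) ≤ A - κ * S),
    mul_nonneg (mul_nonneg hκ0.le (by linarith : (0:ℝ) ≤ 2 - κ)) hA]


/-- Step 3 of the proof of Theorem 5.1: coercivity of the Hermitian quadratic form
`2⟨aw,w⟩ + ‖z‖² − 2 Re⟨σᵀw, z⟩` under the super-parabolicity conditions. -/
theorem hermitian_form_coercivity (κ : ℝ) (hκ : κ ∈ Set.Ioo (0:ℝ) 1) :
    ∃ μ : ℝ, 0 < μ ∧
      ∀ (d d₁ : ℕ), 0 < d → 0 < d₁ →
        ∀ (a : Matrix (Fin d) (Fin d) ℝ) (σ : Matrix (Fin d) (Fin d₁) ℝ),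
          a.IsSymm →
          (∀ x : Fin d → ℝ,
            κ * (∑ j, (x j)^2) + (∑ k, (∑ j, σ j k * x j)^2)
              ≤ 2 * ∑ j, ∑ l, a j l * x j * x l) →
          (∀ x : Fin d → ℝ,
            (∑ k, (∑ j, σ j k * x j)^2) ≤ κ⁻¹ * ∑ j, (x j)^2) →
          ∀ (w : Fin d → ℂ) (z : Fin d₁ → ℂ),
            μ * κ^2 * ((∑ j, ‖w j‖^2) + ∑ k, ‖z k‖^2)
              ≤ (2 * ∑ j, ∑ l, (a j l : ℂ) * starRingEnd ℂ (w j) * w l).re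
                + (∑ k, ‖z k‖^2)
                - 2 * (∑ j, ∑ k, (σ j k : ℂ) * starRingEnd ℂ (w j) * z k).re := by
  obtain ⟨hκ0, hκ1⟩ := hκ
  refine ⟨1/4, by norm_num, ?_⟩
  intro d d₁ hd hd₁ a σ hsymm h1 h2 w z
  have key1 := real_coercive κ hκ0 hκ1 a σ h1 h2 (fun j => (w j).re) (fun k => (z k).re)
  have key2 := real_coercive κ hκ0 hκ1 a σ h1 h2 (fun j => (w j).im) (fun k => (z k).im)
  have hwnorm : ∀ j, ‖w j‖^2 = (w j).re^2 + (w j).im^2 := fun j => by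
    rw [Complex.sq_norm, Complex.normSq_apply]; ring
  have hznorm : ∀ k, ‖z k‖^2 = (z k).re^2 + (z k).im^2 := fun k => by
    rw [Complex.sq_norm, Complex.normSq_apply]; ring
  have hare : (2 * ∑ j, ∑ l, (a j l : ℂ) * starRingEnd ℂ (w j) * w l).re
      = 2 * ((∑ j, ∑ l, a j l * (w j).re * (w l).re)
           + (∑ j, ∑ l, a j l * (w j).im * (w l).im)) := by
    have h2re : (∑ j, ∑ l, (a j l : ℂ) * starRingEnd ℂ (w j) * w l).re
        = ∑ j, ∑ l, (a j l * (w j).re * (w l).re + a j l * (w j).im * (w l).im) := by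
      rw [Complex.re_sum]
      refine Finset.sum_congr rfl fun j _ => ?_
      rw [Complex.re_sum]
      refine Finset.sum_congr rfl fun l _ => ?_
      simp only [Complex.mul_re, Complex.mul_im, Complex.conj_re, Complex.conj_im,
        Complex.ofReal_re, Complex.ofReal_im]
      ring
    have h2 : ∀ X : ℂ, (2 * X).re = 2 * X.re := fun X => by
      simp [Complex.mul_re]
    rw [h2, h2re, ← Finset.sum_add_distrib]
    rw [show (∑ j, ((∑ l, a j l * (w j).re * (w l).re) + ∑ l, a j l * (w j).im * (w l).im))
        = ∑ j, ∑ l, (a j l * (w j).re * (w l).re + a j l * (w j).im * (w l).im) from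
      Finset.sum_congr rfl fun j _ => (Finset.sum_add_distrib).symm]
  have hσre : (∑ j, ∑ k, (σ j k : ℂ) * starRingEnd ℂ (w j) * z k).re
      = (∑ j, ∑ k, σ j k * (w j).re * (z k).re)
        + ∑ j, ∑ k, σ j k * (w j).im * (z k).im := by
    rw [Complex.re_sum, ← Finset.sum_add_distrib]
    refine Finset.sum_congr rfl fun j _ => ?_
    rw [Complex.re_sum, ← Finset.sum_add_distrib]
    refine Finset.sum_congr rfl fun k _ => ?_
    simp only [Complex.mul_re, Complex.mul_im, Complex.conj_re, Complex.conj_im,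
      Complex.ofReal_re, Complex.ofReal_im]
    ring
  simp only [hwnorm, hznorm]
  rw [hare, hσre, Finset.sum_add_distrib, Finset.sum_add_distrib]
  linarith [key1, key2]
end

section
/- Let n, r, m be integers with n ≥ 1, 0 ≤ r ≤ n − 1 and 0 ≤ m ≤ n − r − 1. There exists a constant C depending only on n and r such that for every function h : (0,∞) → ℂ that is max(r,1)-times continuously differentiable on (0,∞) and vanishes for all sufficiently large x, one has ‖x^m h‖ ≤ C ( ‖x^n h^{(r)}‖ + ‖x^r h^{(r)}‖ ), the inequality being understood in [0,∞]. -/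
open MeasureTheory Set

open scoped ENNReal NNReal

lemma pointwise_bound_s14 {h : ℝ → ℂ} (hh : ContDiffOn ℝ 1 h (Set.Ioi 0))
    {ρ : ℝ} (hρ : ∀ x, ρ ≤ x → h x = 0) {x : ℝ} (hx : 0 < x) :
    ENNReal.ofReal ‖h x‖ ≤ ∫⁻ t in Set.Ioi x, ENNReal.ofReal ‖deriv h t‖ := by
  set b : ℝ := max ρ x + 1 with hb_def
  have hxb : x < b := lt_of_le_of_lt (le_max_right _ _) (lt_add_one _)
  have hρb : ρ ≤ b := le_of_lt (lt_of_le_of_lt (le_max_left _ _) (lt_add_one _))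
  have hsub : Set.uIcc x b ⊆ Set.Ioi 0 := by
    rw [Set.uIcc_of_le hxb.le]
    intro t ht
    exact lt_of_lt_of_le hx ht.1
  have hcontD : ContinuousOn (deriv h) (Set.Ioi 0) := by
    have h1 : ContDiffOn ℝ 0 (derivWithin h (Set.Ioi 0)) (Set.Ioi 0) :=
      hh.derivWithin isOpen_Ioi.uniqueDiffOn (by norm_num)
    have h1 : ContinuousOn (derivWithin h (Set.Ioi 0)) (Set.Ioi 0) := h1.continuousOn
    exact h1.congr fun t ht => (derivWithin_of_isOpen isOpen_Ioi ht).symm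
  have hdiff : ∀ t ∈ Set.uIcc x b, DifferentiableAt ℝ h t := fun t ht =>
    ((hh.contDiffAt (isOpen_Ioi.mem_nhds (hsub ht))).differentiableAt one_ne_zero)
  have hint : IntervalIntegrable (deriv h) volume x b :=
    (hcontD.mono hsub).intervalIntegrable
  have hftc : ∫ y in x..b, deriv h y = h b - h x :=
    intervalIntegral.integral_deriv_eq_sub hdiff hint
  have hhb : h b = 0 := hρ b hρb
  have hnorm : ‖h x‖ ≤ ∫ y in x..b, ‖deriv h y‖ := by
    have : ‖h x‖ = ‖∫ y in x..b, deriv h y‖ := by rw [hftc, hhb, zero_sub, norm_neg]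
    rw [this]
    exact intervalIntegral.norm_integral_le_integral_norm hxb.le
  have hIoc : ∫ y in x..b, ‖deriv h y‖ = ∫ y in Set.Ioc x b, ‖deriv h y‖ :=
    intervalIntegral.integral_of_le hxb.le
  have hIntOn : IntegrableOn (fun y => ‖deriv h y‖) (Set.Ioc x b) volume := by
    rw [← intervalIntegrable_iff_integrableOn_Ioc_of_le hxb.le]
    exact hint.norm
  calc ENNReal.ofReal ‖h x‖ ≤ ENNReal.ofReal (∫ y in Set.Ioc x b, ‖deriv h y‖) := by
        exact ENNReal.ofReal_le_ofReal (hIoc ▸ hnorm)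
    _ ≤ ∫⁻ y in Set.Ioc x b, ENNReal.ofReal ‖deriv h y‖ :=
        le_of_eq (ofReal_integral_eq_lintegral_ofReal hIntOn
          (Filter.Eventually.of_forall fun y => norm_nonneg _))
    _ ≤ ∫⁻ t in Set.Ioi x, ENNReal.ofReal ‖deriv h t‖ :=
        lintegral_mono_set Set.Ioc_subset_Ioi_self

lemma holder_bound (m : ℕ) {h : ℝ → ℂ} {x : ℝ} (hx : 0 < x) :
    (∫⁻ t in Set.Ioi x, ENNReal.ofReal ‖deriv h t‖)
      ≤ (∫⁻ t in Set.Ioi x,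
            ENNReal.ofReal (t ^ (2*(m:ℝ) + 3/2) * ‖deriv h t‖^2)) ^ (1/2:ℝ)
        * ENNReal.ofReal (x ^ (1 - (2*(m:ℝ) + 3/2)) / ((2*(m:ℝ) + 3/2) - 1)) ^ (1/2:ℝ) := by
  set p : ℝ := (m:ℝ) + 3/4 with hp_def
  have hp1 : (1:ℝ) < 2*p := by
    have : (0:ℝ) ≤ (m:ℝ) := Nat.cast_nonneg m
    rw [hp_def]; linarith
  have h2p : 2*(m:ℝ) + 3/2 = 2*p := by rw [hp_def]; ring
  rw [h2p]
  have meas1 : AEMeasurable (fun t : ℝ => ENNReal.ofReal (t ^ p * ‖deriv h t‖))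
      (volume.restrict (Set.Ioi x)) :=
    (((measurable_id.pow measurable_const).mul
      (measurable_deriv h).norm).ennreal_ofReal).aemeasurable
  have meas2 : AEMeasurable (fun t : ℝ => ENNReal.ofReal (t ^ (-p)))
      (volume.restrict (Set.Ioi x)) :=
    ((measurable_id.pow measurable_const).ennreal_ofReal).aemeasurable
  have hsplit : ∀ t ∈ Set.Ioi x, ENNReal.ofReal ‖deriv h t‖ =
      ((fun t : ℝ => ENNReal.ofReal (t ^ p * ‖deriv h t‖)) *
       (fun t : ℝ => ENNReal.ofReal (t ^ (-p)))) t := by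
    intro t ht
    have ht0 : 0 < t := lt_trans hx ht
    have hnn : 0 ≤ t ^ p * ‖deriv h t‖ := by positivity
    simp only [Pi.mul_apply, ← ENNReal.ofReal_mul hnn]
    congr 1
    rw [mul_comm (t ^ p) _, mul_assoc, ← Real.rpow_add ht0]
    simp
  calc (∫⁻ t in Set.Ioi x, ENNReal.ofReal ‖deriv h t‖)
      = ∫⁻ t in Set.Ioi x, ((fun t : ℝ => ENNReal.ofReal (t ^ p * ‖deriv h t‖)) *
          (fun t : ℝ => ENNReal.ofReal (t ^ (-p)))) t :=
        setLIntegral_congr_fun measurableSet_Ioi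
          hsplit
    _ ≤ (∫⁻ t in Set.Ioi x, ENNReal.ofReal (t ^ p * ‖deriv h t‖) ^ (2:ℝ)) ^ (1/2:ℝ)
        * (∫⁻ t in Set.Ioi x, ENNReal.ofReal (t ^ (-p)) ^ (2:ℝ)) ^ (1/2:ℝ) :=
        ENNReal.lintegral_mul_le_Lp_mul_Lq _
          (⟨by norm_num, by norm_num, by norm_num⟩ : Real.HolderConjugate 2 2) meas1 meas2
    _ = (∫⁻ t in Set.Ioi x, ENNReal.ofReal (t ^ (2*p) * ‖deriv h t‖^2)) ^ (1/2:ℝ)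
        * ENNReal.ofReal (x ^ (1 - 2*p) / (2*p - 1)) ^ (1/2:ℝ) := by
        congr 1
        · congr 1
          refine setLIntegral_congr_fun measurableSet_Ioi
            (fun t ht => ?_)
          have ht0 : 0 < t := lt_trans hx ht
          have hnn : 0 ≤ t ^ p * ‖deriv h t‖ := by positivity
          have e2 : ENNReal.ofReal (t ^ p * ‖deriv h t‖) ^ (2:ℝ)
              = ENNReal.ofReal (t ^ p * ‖deriv h t‖) ^ (2:ℕ) := by
            rw [← ENNReal.rpow_natCast]; norm_num
          rw [e2, ← ENNReal.ofReal_pow hnn]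
          congr 1
          rw [mul_pow, ← Real.rpow_natCast (t ^ p) 2, ← Real.rpow_mul ht0.le]
          norm_num [mul_comm]
        · congr 1
          have e1 : ∀ t ∈ Set.Ioi x, ENNReal.ofReal (t ^ (-p)) ^ (2:ℝ)
              = ENNReal.ofReal (t ^ (-(2*p))) := by
            intro t ht
            have ht0 : 0 < t := lt_trans hx ht
            have e2 : ENNReal.ofReal (t ^ (-p)) ^ (2:ℝ)
                = ENNReal.ofReal (t ^ (-p)) ^ (2:ℕ) := by
              rw [← ENNReal.rpow_natCast]; norm_num
            rw [e2, ← ENNReal.ofReal_pow (by positivity)]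
            congr 1
            rw [← Real.rpow_natCast (t ^ (-p)) 2, ← Real.rpow_mul ht0.le]
            norm_num [mul_comm]
          rw [setLIntegral_congr_fun measurableSet_Ioi e1]
          have hint : IntegrableOn (fun t : ℝ => t ^ (-(2*p))) (Set.Ioi x) volume :=
            integrableOn_Ioi_rpow_of_lt (by linarith) hx
          rw [← ofReal_integral_eq_lintegral_ofReal hint ?_]
          · rw [integral_Ioi_rpow_of_lt (by linarith) hx]
            congr 1
            rw [show -(2*p) + 1 = 1 - 2*p by ring]
            rw [div_eq_div_iff (by linarith) (by linarith)]
            ring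
          · filter_upwards [self_mem_ae_restrict (measurableSet_Ioi :
              MeasurableSet (Set.Ioi x))] with t ht
            have ht0 : 0 < t := lt_trans hx ht
            positivity

lemma ennreal_sqrt_sq (a : ℝ≥0∞) : (a ^ (1/2:ℝ)) ^ (2:ℕ) = a := by
  rw [← ENNReal.rpow_natCast (a ^ (1/2:ℝ)) 2, ← ENNReal.rpow_mul]
  norm_num

lemma sq_pointwise (m : ℕ) {h : ℝ → ℂ} (hh : ContDiffOn ℝ 1 h (Set.Ioi 0))
    {ρ : ℝ} (hρ : ∀ x, ρ ≤ x → h x = 0) {x : ℝ} (hx : 0 < x) :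
    ENNReal.ofReal (x ^ (2*m) * ‖h x‖^2)
      ≤ 2 * (ENNReal.ofReal (x ^ (-(1/2):ℝ)) *
          ∫⁻ t in Set.Ioi x, ENNReal.ofReal (t ^ (2*(m:ℝ) + 3/2) * ‖deriv h t‖^2)) := by
  set A : ℝ≥0∞ := ∫⁻ t in Set.Ioi x, ENNReal.ofReal (t ^ (2*(m:ℝ) + 3/2) * ‖deriv h t‖^2)
    with hA_def
  set B : ℝ≥0∞ := ENNReal.ofReal (x ^ (1 - (2*(m:ℝ) + 3/2)) / ((2*(m:ℝ) + 3/2) - 1))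
    with hB_def
  have hkey : ENNReal.ofReal ‖h x‖ ≤ A ^ (1/2:ℝ) * B ^ (1/2:ℝ) :=
    (pointwise_bound_s14 hh hρ hx).trans (holder_bound m hx)
  have hm0 : (0:ℝ) ≤ (m:ℝ) := Nat.cast_nonneg m
  have hscal : ENNReal.ofReal (x ^ (2*m)) * B ≤ 2 * ENNReal.ofReal (x ^ (-(1/2):ℝ)) := by
    rw [hB_def, ← ENNReal.ofReal_mul (by positivity)]
    have h2 : (2:ℝ≥0∞) * ENNReal.ofReal (x ^ (-(1/2):ℝ))
        = ENNReal.ofReal (2 * x ^ (-(1/2):ℝ)) := by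
      rw [ENNReal.ofReal_mul (by norm_num), ENNReal.ofReal_ofNat]
    rw [h2]
    apply ENNReal.ofReal_le_ofReal
    have hxpow : x ^ (2*m) * x ^ (1 - (2*(m:ℝ) + 3/2)) = x ^ (-(1/2):ℝ) := by
      rw [← Real.rpow_natCast x (2*m), ← Real.rpow_add hx]
      congr 1
      push_cast
      ring
    rw [mul_div_assoc', hxpow]
    have hden : (1:ℝ)/2 ≤ (2*(m:ℝ) + 3/2) - 1 := by linarith
    have hnum : (0:ℝ) ≤ x ^ (-(1/2):ℝ) := by positivity
    calc x ^ (-(1/2):ℝ) / ((2*(m:ℝ) + 3/2) - 1) ≤ x ^ (-(1/2):ℝ) / (1/2) :=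
          div_le_div_of_nonneg_left hnum (by norm_num) hden  -- check arg order
      _ = 2 * x ^ (-(1/2):ℝ) := by ring
  calc ENNReal.ofReal (x ^ (2*m) * ‖h x‖^2)
      = ENNReal.ofReal (x ^ (2*m)) * ENNReal.ofReal ‖h x‖ ^ (2:ℕ) := by
        rw [← ENNReal.ofReal_pow (norm_nonneg _), ← ENNReal.ofReal_mul (by positivity)]
    _ ≤ ENNReal.ofReal (x ^ (2*m)) * (A ^ (1/2:ℝ) * B ^ (1/2:ℝ)) ^ (2:ℕ) := by
        gcongr
    _ = (ENNReal.ofReal (x ^ (2*m)) * B) * A := by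
        rw [mul_pow, ennreal_sqrt_sq, ennreal_sqrt_sq]; ring
    _ ≤ (2 * ENNReal.ofReal (x ^ (-(1/2):ℝ))) * A := by gcongr
    _ = 2 * (ENNReal.ofReal (x ^ (-(1/2):ℝ)) * A) := by ring

lemma tonelli_step (m : ℕ) (h : ℝ → ℂ) :
    (∫⁻ x in Set.Ioi (0:ℝ), ENNReal.ofReal (x ^ (-(1/2):ℝ)) *
        ∫⁻ t in Set.Ioi x, ENNReal.ofReal (t ^ (2*(m:ℝ) + 3/2) * ‖deriv h t‖^2))
      = 2 * ∫⁻ t in Set.Ioi (0:ℝ), ENNReal.ofReal (t ^ (2*m+2) * ‖deriv h t‖^2) := by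
  set w : ℝ → ℝ≥0∞ := fun x => ENNReal.ofReal (x ^ (-(1/2):ℝ)) with hw_def
  set v : ℝ → ℝ≥0∞ := fun t => ENNReal.ofReal (t ^ (2*(m:ℝ)+3/2) * ‖deriv h t‖^2) with hv_def
  have meas_w : Measurable w := (measurable_id.pow measurable_const).ennreal_ofReal
  have meas_v : Measurable v :=
    ((measurable_id.pow measurable_const).mul
      ((measurable_deriv h).norm.pow_const 2)).ennreal_ofReal
  set G : ℝ → ℝ → ℝ≥0∞ :=
    fun x t => ({q : ℝ × ℝ | q.1 < q.2}).indicator (fun q => w q.1 * v q.2) (x, t) with hG_def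
  have hG_eq1 : ∀ x t : ℝ, G x t = (Set.Ioi x).indicator (fun s => w x * v s) t := by
    intro x t
    by_cases hxt : x < t
    · simp [hG_def, Set.indicator, hxt, Set.mem_Ioi]
    · simp [hG_def, Set.indicator, hxt, Set.mem_Ioi]
  have hG_eq2 : ∀ x t : ℝ, G x t = (Set.Iio t).indicator (fun s => w s * v t) x := by
    intro x t
    by_cases hxt : x < t
    · simp [hG_def, Set.indicator, hxt, Set.mem_Iio]
    · simp [hG_def, Set.indicator, hxt, Set.mem_Iio]
  have step1 : ∀ x ∈ Set.Ioi (0:ℝ),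
      w x * (∫⁻ t in Set.Ioi x, v t) = ∫⁻ t in Set.Ioi (0:ℝ), G x t := by
    intro x hx
    have : (∫⁻ t in Set.Ioi (0:ℝ), G x t)
        = ∫⁻ t in Set.Ioi (0:ℝ), (Set.Ioi x).indicator (fun s => w x * v s) t := by
      exact lintegral_congr fun t => by rw [hG_eq1]
    rw [this, lintegral_indicator measurableSet_Ioi,
      Measure.restrict_restrict measurableSet_Ioi,
      Set.inter_eq_self_of_subset_left (Set.Ioi_subset_Ioi (le_of_lt hx)),
      lintegral_const_mul' _ _ ENNReal.ofReal_ne_top]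
  have step3 : ∀ t ∈ Set.Ioi (0:ℝ),
      (∫⁻ x in Set.Ioi (0:ℝ), G x t) = (∫⁻ x in Set.Ioo 0 t, w x) * v t := by
    intro t ht
    have : (∫⁻ x in Set.Ioi (0:ℝ), G x t)
        = ∫⁻ x in Set.Ioi (0:ℝ), (Set.Iio t).indicator (fun s => w s * v t) x := by
      exact lintegral_congr fun x => by rw [hG_eq2]
    rw [this, lintegral_indicator measurableSet_Iio,
      Measure.restrict_restrict measurableSet_Iio, Set.Iio_inter_Ioi,
      lintegral_mul_const' _ _ ENNReal.ofReal_ne_top]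
  have step4 : ∀ t ∈ Set.Ioi (0:ℝ),
      (∫⁻ x in Set.Ioo (0:ℝ) t, w x) = ENNReal.ofReal (2 * t ^ (1/2:ℝ)) := by
    intro t ht
    rw [Measure.restrict_congr_set Ioo_ae_eq_Ioc]
    have hint : IntegrableOn (fun x : ℝ => x ^ (-(1/2):ℝ)) (Set.Ioc 0 t) volume :=
      (intervalIntegrable_iff_integrableOn_Ioc_of_le (le_of_lt ht)).mp
        (intervalIntegral.intervalIntegrable_rpow' (by norm_num))
    have hnn : 0 ≤ᵐ[volume.restrict (Set.Ioc (0:ℝ) t)] fun x : ℝ => x ^ (-(1/2):ℝ) := by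
      filter_upwards [self_mem_ae_restrict
        (measurableSet_Ioc : MeasurableSet (Set.Ioc (0:ℝ) t))] with s hs
      exact Real.rpow_nonneg (le_of_lt hs.1) _
    rw [hw_def]
    rw [← ofReal_integral_eq_lintegral_ofReal hint hnn]
    congr 1
    rw [← intervalIntegral.integral_of_le (le_of_lt ht),
      integral_rpow (Or.inl (by norm_num))]
    rw [Real.zero_rpow (by norm_num : (-(1/2):ℝ) + 1 ≠ 0)]
    rw [show (-(1/2):ℝ) + 1 = 1/2 by norm_num]
    ring
  have step5 : ∀ t ∈ Set.Ioi (0:ℝ),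
      ENNReal.ofReal (2 * t ^ (1/2:ℝ)) * v t
        = 2 * ENNReal.ofReal (t ^ (2*m+2) * ‖deriv h t‖^2) := by
    intro t ht
    have ht0 : (0:ℝ) < t := ht
    rw [hv_def]
    have hnn : (0:ℝ) ≤ t ^ (2*(m:ℝ)+3/2) * ‖deriv h t‖^2 := by positivity
    rw [← ENNReal.ofReal_mul (by positivity : (0:ℝ) ≤ 2 * t ^ (1/2:ℝ)),
      show (2:ℝ≥0∞) = ENNReal.ofReal 2 from (ENNReal.ofReal_ofNat 2).symm,
      ← ENNReal.ofReal_mul (by norm_num : (0:ℝ) ≤ 2)]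
    congr 1
    have : t ^ (1/2:ℝ) * t ^ (2*(m:ℝ)+3/2) = t ^ (2*m+2) := by
      rw [← Real.rpow_add ht0, ← Real.rpow_natCast t (2*m+2)]
      congr 1
      push_cast
      ring
    calc 2 * t ^ (1/2:ℝ) * (t ^ (2*(m:ℝ)+3/2) * ‖deriv h t‖^2)
        = 2 * ((t ^ (1/2:ℝ) * t ^ (2*(m:ℝ)+3/2)) * ‖deriv h t‖^2) := by ring
      _ = 2 * (t ^ (2*m+2) * ‖deriv h t‖^2) := by rw [this]
  have measG : AEMeasurable (fun q : ℝ × ℝ => G q.1 q.2)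
      ((volume.restrict (Set.Ioi (0:ℝ))).prod (volume.restrict (Set.Ioi (0:ℝ)))) := by
    have : (fun q : ℝ × ℝ => G q.1 q.2)
        = ({q : ℝ × ℝ | q.1 < q.2}).indicator (fun q => w q.1 * v q.2) := by
      funext q; rfl
    rw [this]
    exact (((meas_w.comp measurable_fst).mul (meas_v.comp measurable_snd)).indicator
      (measurableSet_lt measurable_fst measurable_snd)).aemeasurable
  calc (∫⁻ x in Set.Ioi (0:ℝ), w x * ∫⁻ t in Set.Ioi x, v t)
      = ∫⁻ x in Set.Ioi (0:ℝ), ∫⁻ t in Set.Ioi (0:ℝ), G x t :=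
        setLIntegral_congr_fun measurableSet_Ioi step1
    _ = ∫⁻ t in Set.Ioi (0:ℝ), ∫⁻ x in Set.Ioi (0:ℝ), G x t :=
        lintegral_lintegral_swap measG
    _ = ∫⁻ t in Set.Ioi (0:ℝ), 2 * ENNReal.ofReal (t ^ (2*m+2) * ‖deriv h t‖^2) := by
        refine setLIntegral_congr_fun measurableSet_Ioi
          (fun t ht => ?_)
        rw [step3 t ht, step4 t ht, step5 t ht]
    _ = 2 * ∫⁻ t in Set.Ioi (0:ℝ), ENNReal.ofReal (t ^ (2*m+2) * ‖deriv h t‖^2) :=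
        lintegral_const_mul' _ _ (by norm_num)

lemma hardy_step (m : ℕ) {h : ℝ → ℂ} (hh : ContDiffOn ℝ 1 h (Set.Ioi 0))
    {ρ : ℝ} (hρ : ∀ x, ρ ≤ x → h x = 0) :
    (∫⁻ x in Set.Ioi (0:ℝ), ENNReal.ofReal (x ^ (2*m) * ‖h x‖^2))
      ≤ 4 * ∫⁻ x in Set.Ioi (0:ℝ), ENNReal.ofReal (x ^ (2*m+2) * ‖deriv h x‖^2) := by
  calc (∫⁻ x in Set.Ioi (0:ℝ), ENNReal.ofReal (x ^ (2*m) * ‖h x‖^2))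
      ≤ ∫⁻ x in Set.Ioi (0:ℝ), 2 * (ENNReal.ofReal (x ^ (-(1/2):ℝ)) *
          ∫⁻ t in Set.Ioi x, ENNReal.ofReal (t ^ (2*(m:ℝ) + 3/2) * ‖deriv h t‖^2)) := by
        refine lintegral_mono_ae ?_
        filter_upwards [self_mem_ae_restrict
          (measurableSet_Ioi : MeasurableSet (Set.Ioi (0:ℝ)))] with x hx
        exact sq_pointwise m hh hρ hx
    _ = 2 * ∫⁻ x in Set.Ioi (0:ℝ), ENNReal.ofReal (x ^ (-(1/2):ℝ)) *
          ∫⁻ t in Set.Ioi x, ENNReal.ofReal (t ^ (2*(m:ℝ) + 3/2) * ‖deriv h t‖^2) :=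
        lintegral_const_mul' _ _ (by norm_num)
    _ = 2 * (2 * ∫⁻ x in Set.Ioi (0:ℝ), ENNReal.ofReal (x ^ (2*m+2) * ‖deriv h x‖^2)) := by
        rw [tonelli_step m h]
    _ = 4 * ∫⁻ x in Set.Ioi (0:ℝ), ENNReal.ofReal (x ^ (2*m+2) * ‖deriv h x‖^2) := by
        ring

lemma hardy_sqrt (m : ℕ) {h : ℝ → ℂ} (hh : ContDiffOn ℝ 1 h (Set.Ioi 0))
    {ρ : ℝ} (hρ : ∀ x, ρ ≤ x → h x = 0) :
    (∫⁻ x in Set.Ioi (0:ℝ), ENNReal.ofReal (x ^ (2*m) * ‖h x‖^2)) ^ (1/2:ℝ)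
      ≤ 2 * (∫⁻ x in Set.Ioi (0:ℝ),
          ENNReal.ofReal (x ^ (2*(m+1)) * ‖derivWithin h (Set.Ioi 0) x‖^2)) ^ (1/2:ℝ) := by
  have hcongr : (∫⁻ x in Set.Ioi (0:ℝ),
      ENNReal.ofReal (x ^ (2*(m+1)) * ‖derivWithin h (Set.Ioi 0) x‖^2))
      = ∫⁻ x in Set.Ioi (0:ℝ), ENNReal.ofReal (x ^ (2*m+2) * ‖deriv h x‖^2) := by
    refine setLIntegral_congr_fun measurableSet_Ioi
      (fun x hx => ?_)
    rw [derivWithin_of_isOpen isOpen_Ioi hx, show 2*(m+1) = 2*m+2 from by ring]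
  rw [hcongr]
  have h1 := ENNReal.rpow_le_rpow (hardy_step m hh hρ) (by norm_num : (0:ℝ) ≤ 1/2)
  refine h1.trans (le_of_eq ?_)
  rw [ENNReal.mul_rpow_of_nonneg _ _ (by norm_num : (0:ℝ) ≤ 1/2)]
  congr 1
  rw [show (4:ℝ≥0∞) = 2^(2:ℕ) from by norm_num, ← ENNReal.rpow_natCast,
    ← ENNReal.rpow_mul]
  norm_num

lemma aux_interp (r : ℕ) : ∃ C : ℝ, 0 < C ∧ ∀ (m : ℕ) (h : ℝ → ℂ),
    ContDiffOn ℝ (r : ℕ∞) h (Set.Ioi 0) → (∃ ρ : ℝ, ∀ x, ρ ≤ x → h x = 0) →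
    (∫⁻ x in Set.Ioi (0:ℝ), ENNReal.ofReal (x ^ (2*m) * ‖h x‖^2)) ^ (1/2:ℝ)
      ≤ ENNReal.ofReal C *
        (∫⁻ x in Set.Ioi (0:ℝ),
          ENNReal.ofReal (x ^ (2*(m+r)) *
            ‖iteratedDerivWithin r h (Set.Ioi 0) x‖^2)) ^ (1/2:ℝ) := by
  induction r with
  | zero =>
    refine ⟨1, one_pos, fun m h _ _ => ?_⟩
    simp [iteratedDerivWithin_zero]
  | succ r IH =>
    obtain ⟨C, hC, hIH⟩ := IH
    refine ⟨2*C, by linarith, fun m h hh hvan => ?_⟩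
    obtain ⟨ρ, hρ⟩ := hvan
    have hh1 : ContDiffOn ℝ 1 h (Set.Ioi 0) := by
      refine hh.of_le ?_
      exact_mod_cast Nat.cast_le.mpr (Nat.succ_le_succ (Nat.zero_le r))
    set g : ℝ → ℂ := derivWithin h (Set.Ioi 0) with hg_def
    have hg : ContDiffOn ℝ (r : ℕ∞) g (Set.Ioi 0) := by
      refine hh.derivWithin isOpen_Ioi.uniqueDiffOn ?_
      exact_mod_cast le_refl (r+1 : ℕ∞)
    have hgvan : ∃ ρ' : ℝ, ∀ x, ρ' ≤ x → g x = 0 := by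
      refine ⟨max ρ 0 + 1, fun x hx => ?_⟩
      have hx0 : (0:ℝ) < x :=
        lt_of_le_of_lt (le_max_right ρ 0) (lt_of_lt_of_le (lt_add_one _) hx)
      have hxρ : max ρ 0 < x := lt_of_lt_of_le (lt_add_one _) hx
      rw [hg_def, derivWithin_of_isOpen isOpen_Ioi hx0]
      have hev : h =ᶠ[nhds x] (fun _ => (0:ℂ)) := by
        filter_upwards [isOpen_Ioi.mem_nhds hxρ] with y hy
        exact hρ y (le_of_lt (lt_of_le_of_lt (le_max_left ρ 0) hy))
      rw [hev.deriv_eq, deriv_const]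
    have key := hardy_sqrt m hh1 hρ
    have ih := hIH (m+1) g hg hgvan
    have hiter : (∫⁻ x in Set.Ioi (0:ℝ),
        ENNReal.ofReal (x ^ (2*((m+1)+r)) *
          ‖iteratedDerivWithin r g (Set.Ioi 0) x‖^2))
        = ∫⁻ x in Set.Ioi (0:ℝ),
        ENNReal.ofReal (x ^ (2*(m+(r+1))) *
          ‖iteratedDerivWithin (r+1) h (Set.Ioi 0) x‖^2) := by
      refine setLIntegral_congr_fun measurableSet_Ioi
        (fun x hx => ?_)
      rw [show 2*((m+1)+r) = 2*(m+(r+1)) from by ring,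
        iteratedDerivWithin_succ']
    rw [hiter] at ih
    calc (∫⁻ x in Set.Ioi (0:ℝ), ENNReal.ofReal (x ^ (2*m) * ‖h x‖^2)) ^ (1/2:ℝ)
        ≤ 2 * (∫⁻ x in Set.Ioi (0:ℝ),
            ENNReal.ofReal (x ^ (2*(m+1)) * ‖g x‖^2)) ^ (1/2:ℝ) := key
      _ ≤ 2 * (ENNReal.ofReal C *
            (∫⁻ x in Set.Ioi (0:ℝ),
              ENNReal.ofReal (x ^ (2*(m+(r+1))) *
                ‖iteratedDerivWithin (r+1) h (Set.Ioi 0) x‖^2)) ^ (1/2:ℝ)) :=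
          mul_le_mul' le_rfl ih
      _ = ENNReal.ofReal (2*C) *
            (∫⁻ x in Set.Ioi (0:ℝ),
              ENNReal.ofReal (x ^ (2*(m+(r+1))) *
                ‖iteratedDerivWithin (r+1) h (Set.Ioi 0) x‖^2)) ^ (1/2:ℝ) := by
          rw [ENNReal.ofReal_mul (by norm_num : (0:ℝ) ≤ 2), ENNReal.ofReal_ofNat,
            mul_assoc]


/-- The weighted interpolation estimate `‖x^m h‖ ≤ C(‖x^n h^{(r)}‖ + ‖x^r h^{(r)}‖)`
from the end of Step 1 of the proof of Theorem 3.1. -/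
theorem weighted_lower_order_estimate
    (n r m : ℕ) (hn : 1 ≤ n) (hr : r + 1 ≤ n) (hm : m + r + 1 ≤ n) :
    ∃ C : ℝ, 0 < C ∧
      ∀ h : ℝ → ℂ, ContDiffOn ℝ ((max r 1 : ℕ) : ℕ∞) h (Set.Ioi 0) →
        (∃ ρ : ℝ, ∀ x, ρ ≤ x → h x = 0) →
        (∫⁻ x in Set.Ioi (0:ℝ),
            ENNReal.ofReal (x ^ (2*m) * ‖h x‖^2)) ^ (1/2 : ℝ)
          ≤ ENNReal.ofReal C *
            ((∫⁻ x in Set.Ioi (0:ℝ),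
                ENNReal.ofReal (x ^ (2*n) *
                  ‖iteratedDerivWithin r h (Set.Ioi 0) x‖^2)) ^ (1/2 : ℝ)
             + (∫⁻ x in Set.Ioi (0:ℝ),
                ENNReal.ofReal (x ^ (2*r) *
                  ‖iteratedDerivWithin r h (Set.Ioi 0) x‖^2)) ^ (1/2 : ℝ)) := by
  obtain ⟨C, hC, hA⟩ := aux_interp r
  refine ⟨C, hC, fun h hh hvan => ?_⟩
  have hh' : ContDiffOn ℝ (r : ℕ∞) h (Set.Ioi 0) :=
    hh.of_le (Nat.cast_le.mpr (le_max_left r 1))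
  have h1 := hA m h hh' hvan
  refine h1.trans ?_
  set D : ℝ → ℂ := iteratedDerivWithin r h (Set.Ioi 0) with hD_def
  have hDmeas : AEMeasurable D (volume.restrict (Set.Ioi (0:ℝ))) := by
    have hcont : ContinuousOn D (Set.Ioi 0) :=
      hh'.continuousOn_iteratedDerivWithin le_rfl isOpen_Ioi.uniqueDiffOn
    exact hcont.aemeasurable measurableSet_Ioi
  have hInt : ∀ (k : ℕ), AEMeasurable
      (fun x : ℝ => ENNReal.ofReal (x ^ k * ‖D x‖^2))
      (volume.restrict (Set.Ioi (0:ℝ))) := fun k =>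
    (((measurable_id.pow_const k).aemeasurable).mul
      ((hDmeas.norm).pow_const 2)).ennreal_ofReal
  have hsum : (∫⁻ x in Set.Ioi (0:ℝ), ENNReal.ofReal (x ^ (2*(m+r)) * ‖D x‖^2))
      ≤ (∫⁻ x in Set.Ioi (0:ℝ), ENNReal.ofReal (x ^ (2*n) * ‖D x‖^2))
        + ∫⁻ x in Set.Ioi (0:ℝ), ENNReal.ofReal (x ^ (2*r) * ‖D x‖^2) := by
    rw [← lintegral_add_left' (hInt (2*n))]
    refine lintegral_mono_ae ?_
    filter_upwards [self_mem_ae_restrict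
      (measurableSet_Ioi : MeasurableSet (Set.Ioi (0:ℝ)))] with x hx
    have hx0 : (0:ℝ) < x := hx
    have hpow : x ^ (2*(m+r)) ≤ x ^ (2*n) + x ^ (2*r) := by
      rcases le_or_gt 1 x with h1x | h1x
      · have : x ^ (2*(m+r)) ≤ x ^ (2*n) :=
          pow_le_pow_right₀ h1x (by omega)
        calc x ^ (2*(m+r)) ≤ x ^ (2*n) := this
          _ ≤ x ^ (2*n) + x ^ (2*r) := le_add_of_nonneg_right (by positivity)
      · have : x ^ (2*(m+r)) ≤ x ^ (2*r) :=
          pow_le_pow_of_le_one (le_of_lt hx0) (le_of_lt h1x) (by omega)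
        calc x ^ (2*(m+r)) ≤ x ^ (2*r) := this
          _ ≤ x ^ (2*n) + x ^ (2*r) := le_add_of_nonneg_left (by positivity)
    calc ENNReal.ofReal (x ^ (2*(m+r)) * ‖D x‖^2)
        ≤ ENNReal.ofReal ((x ^ (2*n) + x ^ (2*r)) * ‖D x‖^2) :=
          ENNReal.ofReal_le_ofReal (by nlinarith [sq_nonneg ‖D x‖, norm_nonneg (D x)])
      _ = ENNReal.ofReal (x ^ (2*n) * ‖D x‖^2) + ENNReal.ofReal (x ^ (2*r) * ‖D x‖^2) := by
          rw [add_mul, ENNReal.ofReal_add (by positivity) (by positivity)]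
  refine mul_le_mul' le_rfl ?_
  calc (∫⁻ x in Set.Ioi (0:ℝ), ENNReal.ofReal (x ^ (2*(m+r)) * ‖D x‖^2)) ^ (1/2:ℝ)
      ≤ ((∫⁻ x in Set.Ioi (0:ℝ), ENNReal.ofReal (x ^ (2*n) * ‖D x‖^2))
        + ∫⁻ x in Set.Ioi (0:ℝ), ENNReal.ofReal (x ^ (2*r) * ‖D x‖^2)) ^ (1/2:ℝ) :=
        ENNReal.rpow_le_rpow hsum (by norm_num)
    _ ≤ _ := ENNReal.rpow_add_le_add_rpow _ _ (by norm_num) (by norm_num)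
end
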